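/- arXiv:2603.28953 — 5 statements merged into one kernel-verified Lean document; each statement's English description precedes it below -/
import Mathlib

section
/- Let X be a set of size k ≥ 2, Σ = X ∪ X⁻¹, and s a reduced word. For any reduced words u, v that avoid s as a factor, there exists a reduced word w such that uwv is reduced and avoids s as a factor. (The subshift of bi-infinite reduced words avoiding s is irreducible.) -/
def FreelyReduced {X : Type*} (w : List (X × Bool)) : Prop :=
  List.Chain' (fun a b => a.1 = b.1 → a.2 = b.2) w

section Aux

variable {α : Type*}

lemma aux_chain'_replicate {R : α → α → Prop} {a : α} (h : R a a) :
    ∀ n, List.Chain' R (List.replicate n a)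
  | 0 => by simp [List.Chain']
  | 1 => by simp [List.Chain']
  | (n+2) => by
      rw [List.replicate_succ, List.replicate_succ, List.Chain', List.isChain_cons_cons,
        ← List.replicate_succ]
      exact ⟨h, aux_chain'_replicate h (n+1)⟩

lemma aux_infix_split {s A B : List α} (h : s <:+: A ++ B) :
    s <:+: A ∨ s <:+: B ∨
      ∃ s₁ s₂, s = s₁ ++ s₂ ∧ s₁ ≠ [] ∧ s₂ ≠ [] ∧ s₁ <:+ A ∧ s₂ <+: B := by
  obtain ⟨t, r, htu⟩ := h
  rw [List.append_assoc] at htu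
  rcases List.append_eq_append_iff.mp htu with ⟨a', hA, h2⟩ | ⟨c', _, hB⟩
  · rcases List.append_eq_append_iff.mp h2 with ⟨x, ha', hr⟩ | ⟨x, hsx, hB⟩
    · left
      exact ⟨t, x, by rw [hA, ha', List.append_assoc]⟩
    · by_cases h0 : a' = []
      · subst h0
        simp only [List.nil_append] at hsx
        right; left
        exact ⟨[], r, by simp [hB, hsx]⟩
      by_cases h1 : x = []
      · subst h1
        rw [List.append_nil] at hsx
        left
        exact ⟨t, [], by simp [hA, hsx]⟩
      · right; right
        exact ⟨a', x, hsx, h0, h1, ⟨t, hA.symm⟩, ⟨r, hB.symm⟩⟩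
  · right; left
    exact ⟨c', r, by rw [hB]; exact List.append_assoc _ _ _⟩

lemma aux_prefix_trim {a b c : List α} (h : a <+: b ++ c) (hl : a.length ≤ b.length) :
    a <+: b := by
  obtain ⟨t, ht⟩ := h
  rcases List.append_eq_append_iff.mp ht with ⟨a', hA, _⟩ | ⟨c', ha, _⟩
  · exact ⟨a', hA.symm⟩
  · have : c' = [] := by
      have := congrArg List.length ha
      simp at this
      have : c'.length = 0 := by omega
      simpa using this
    subst this
    rw [List.append_nil] at ha
    exact ha ▸ List.prefix_refl _

lemma aux_exists_avoid [Fintype α] [DecidableEq α] (h : 4 ≤ Fintype.card α) (a b c : α) :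
    ∃ x, x ≠ a ∧ x ≠ b ∧ x ≠ c := by
  have hcard : ({a, b, c} : Finset α).card ≤ 3 := by
    apply le_trans (Finset.card_insert_le _ _)
    have := Finset.card_insert_le b ({c} : Finset α)
    simp at this ⊢
    omega
  have h2 : (({a, b, c} : Finset α)ᶜ).Nonempty := by
    rw [← Finset.card_pos, Finset.card_compl]
    omega
  obtain ⟨x, hx⟩ := h2
  simp only [Finset.mem_compl, Finset.mem_insert, Finset.mem_singleton, not_or] at hx
  exact ⟨x, hx.1, hx.2.1, hx.2.2⟩

lemma aux_R {X : Type*} {a b : X × Bool} (h : a ≠ (b.1, !b.2)) :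
    a.1 = b.1 → a.2 = b.2 := by
  intro h1
  by_contra h2
  apply h
  have : a.2 = !b.2 := by
    revert h2; cases ha : a.2 <;> cases hb : b.2 <;> simp
  exact Prod.ext h1 this

lemma aux_R' {X : Type*} {a b : X × Bool} (h : b ≠ (a.1, !a.2)) :
    a.1 = b.1 → a.2 = b.2 := by
  intro h1
  by_contra h2
  apply h
  have : b.2 = !a.2 := by
    revert h2; cases a.2 <;> cases b.2 <;> simp
  exact Prod.ext h1.symm this

end Aux

/-- Irreducibility of the subshift of reduced words avoiding a reduced word `s`:
given reduced `u, v` avoiding `s`, there is `w` with `u ++ w ++ v` reduced and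
avoiding `s`. -/
theorem stmt7 {X : Type*} [Fintype X] (hX : 2 ≤ Fintype.card X)
    (s u v : List (X × Bool)) (hs : FreelyReduced s)
    (hu : FreelyReduced u) (hus : ¬ s <:+: u)
    (hv : FreelyReduced v) (hvs : ¬ s <:+: v) :
    ∃ w : List (X × Bool), FreelyReduced (u ++ w ++ v) ∧ ¬ s <:+: (u ++ w ++ v) := by
  classical
  by_cases hsne : s = []
  · exact absurd (hsne ▸ (List.nil_infix (l := u))) hus
  have hcard : 4 ≤ Fintype.card (X × Bool) := by
    rw [Fintype.card_prod, Fintype.card_bool]; omega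
  have hnemp : Nonempty (X × Bool) := Fintype.card_pos_iff.mp (by omega)
  set L := s.length with hLdef
  have hL1 : 1 ≤ L := List.length_pos_iff.mpr hsne
  let e : X × Bool := Classical.arbitrary _
  let q : X × Bool := if h : v = [] then e else v.head h
  obtain ⟨d, hd1, hd2, hd3⟩ :=
    aux_exists_avoid hcard (s.head hsne) (s.getLast hsne) (q.1, !q.2)
  let p : X × Bool := if h : u = [] then e else u.getLast h
  obtain ⟨c, hc1, hc2, hc3⟩ :=
    aux_exists_avoid hcard (s.getLast hsne) (d.1, !d.2) (p.1, !p.2)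
  set C : List (X × Bool) := List.replicate (L+1) c with hCdef
  set D : List (X × Bool) := List.replicate (L+1) d with hDdef
  have hClen : C.length = L + 1 := List.length_replicate
  have hDlen : D.length = L + 1 := List.length_replicate
  have hCne : C ≠ [] := by simp [hCdef]
  have hDne : D ≠ [] := by simp [hDdef]
  -- membership facts
  have hCmem : ∀ x ∈ C, x = c := fun x hx => List.eq_of_mem_replicate hx
  have hDmem : ∀ x ∈ D, x = d := fun x hx => List.eq_of_mem_replicate hx
  refine ⟨C ++ D, ?_, ?_⟩
  · -- reducedness
    show List.Chain' _ _
    rw [List.append_assoc, List.append_assoc, List.Chain', List.isChain_append]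
    refine ⟨hu, ?_, ?_⟩
    · rw [List.isChain_append]
      refine ⟨aux_chain'_replicate (fun _ => rfl) _, ?_, ?_⟩
      · rw [List.isChain_append]
        refine ⟨aux_chain'_replicate (fun _ => rfl) _, hv, ?_⟩
        · intro x hx y hy
          have hvne : v ≠ [] := by rintro rfl; simp at hy
          have hx' : x = d := by
            rw [hDdef, List.replicate_succ', List.getLast?_concat] at hx
            simpa [eq_comm] using hx
          have hy' : y = v.head hvne := by
            rw [List.head?_eq_head hvne] at hy
            simpa [eq_comm] using hy
          subst hx'; subst hy'
          apply aux_R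
          have : q = v.head hvne := by simp [q, hvne]
          rw [← this]
          exact hd3
      · intro x hx y hy
        have hx' : x = c := by
          rw [hCdef, List.replicate_succ', List.getLast?_concat] at hx
          simpa [eq_comm] using hx
        have hy' : y = d := by
          rw [List.head?_append_of_ne_nil _ hDne, hDdef, List.replicate_succ] at hy
          simpa [eq_comm] using hy
        subst hx'; subst hy'
        exact aux_R hc2
    · intro x hx y hy
      have hune : u ≠ [] := by rintro rfl; simp at hx
      have hx' : x = u.getLast hune := by
        rw [List.getLast?_eq_getLast_of_ne_nil hune] at hx
        simpa [eq_comm] using hx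
      have hy' : y = c := by
        rw [List.head?_append_of_ne_nil _ hCne, hCdef, List.replicate_succ] at hy
        simpa [eq_comm] using hy
      subst hx'; subst hy'
      apply aux_R'
      have : p = u.getLast hune := by simp [p, hune]
      rw [← this]
      exact hc3
  · -- avoidance
    intro hinf
    rw [List.append_assoc, List.append_assoc] at hinf
    have hgetLast2 : ∀ (s₁ s₂ : List (X × Bool)) (h2 : s₂ ≠ []),
        s = s₁ ++ s₂ → s.getLast hsne ∈ s₂ := by
      intro s₁ s₂ h2 hse
      have h1 : s.getLast? = s₂.getLast? := by
        rw [hse]; exact List.getLast?_append_of_ne_nil _ h2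
      rw [List.getLast?_eq_getLast_of_ne_nil hsne,
        List.getLast?_eq_getLast_of_ne_nil h2] at h1
      rw [Option.some_inj] at h1
      rw [h1]
      exact List.getLast_mem h2
    rcases aux_infix_split hinf with h | h | ⟨s₁, s₂, hse, h1, h2, h3, h4⟩
    · exact hus h
    · rcases aux_infix_split h with h | h | ⟨s₁, s₂, hse, h1, h2, h3, h4⟩
      · -- s <:+: C
        exact hc1 ((hCmem _ (h.subset (List.getLast_mem hsne))).symm)
      · rcases aux_infix_split h with h | h | ⟨s₁, s₂, hse, h1, h2, h3, h4⟩
        · -- s <:+: D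
          exact hd2 ((hDmem _ (h.subset (List.getLast_mem hsne))).symm)
        · exact hvs h
        · -- s₁ suffix of D, s₂ prefix of v : head s = d
          have hhead : s.head hsne = s₁.head h1 := by
            have := List.head?_append_of_ne_nil s₁ (l₂ := s₂) h1
            rw [← hse, List.head?_eq_head hsne, List.head?_eq_head h1] at this
            simpa using this
          have : s₁.head h1 = d := hDmem _ (h3.subset (List.head_mem h1))
          exact hd1 (by rw [hhead, this])
      · -- s₁ suffix of C, s₂ prefix of D ++ v : last letter is d
        have hlen2 : s₂.length ≤ D.length := by
          have := congrArg List.length hse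
          simp only [List.length_append] at this
          have h1l : 1 ≤ s₁.length := List.length_pos_iff.mpr h1
          omega
        have h4' : s₂ <+: D := aux_prefix_trim h4 hlen2
        have := hgetLast2 s₁ s₂ h2 hse
        exact hd2 ((hDmem _ (h4'.subset this)).symm)
    · -- s₁ suffix of u, s₂ prefix of C ++ (D ++ v) : last letter is c
      have hlen2 : s₂.length ≤ C.length := by
        have := congrArg List.length hse
        simp only [List.length_append] at this
        have h1l : 1 ≤ s₁.length := List.length_pos_iff.mpr h1
        omega
      have h4'' : s₂ <+: C ++ D := by
        have h4b : s₂ <+: (C ++ D) ++ v := by rwa [← List.append_assoc] at h4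
        exact aux_prefix_trim h4b (by rw [List.length_append, hClen, hDlen]; omega)
      have h4' : s₂ <+: C := aux_prefix_trim h4'' hlen2
      have := hgetLast2 s₁ s₂ h2 hse
      exact hc1 ((hCmem _ (h4'.subset this)).symm)
end

section
/- Let k ≥ 2, X = {x₁,...,x_k}, Σ = X ∪ X⁻¹, and L ⊆ Red(X). If there is a reduced word s such that no word of L contains s as a factor (i.e., Σ* s Σ* ∩ L = ∅), then D(L | Red(X)) = lim_{n→∞} |Σⁿ ∩ L| / |Σⁿ ∩ Red(X)| = 0. -/
open Filter Topology

/-- The language of freely reduced words over `Σ = X ∪ X⁻¹`. -/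
def Red (X : Type*) : Set (List (X × Bool)) := {w | FreelyReduced w}

noncomputable def sphereCount {A : Type*} (L : Set (List A)) (n : ℕ) : ℕ :=
  Nat.card {w : List A // w ∈ L ∧ w.length = n}

noncomputable def relRatio {A : Type*} (L M : Set (List A)) (n : ℕ) : ℝ :=
  (sphereCount L n : ℝ) / (sphereCount M n : ℝ)

namespace Stmt8Aux

open Finset List
open scoped Classical

/-! ### All words of a given length as a Finset -/

noncomputable def allW (β : Type*) [Fintype β] : ℕ → Finset (List β)
  | 0 => {[]}
  | n + 1 => (Finset.univ ×ˢ allW β n).image fun p : β × List β => p.1 :: p.2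

lemma mem_allW {β : Type*} [Fintype β] {n : ℕ} {w : List β} :
    w ∈ allW β n ↔ w.length = n := by
  induction n generalizing w with
  | zero => simp [allW, List.length_eq_zero_iff]
  | succ n ih =>
    cases w with
    | nil => simp [allW]
    | cons a t => simp [allW, ih]

lemma sphereCount_eq {β : Type*} [Fintype β] (L : Set (List β)) (n : ℕ) :
    sphereCount L n = ((allW β n).filter (fun w => w ∈ L)).card := by
  have h : {w : List β | w ∈ L ∧ w.length = n} = ↑((allW β n).filter (fun w => w ∈ L)) := by
    ext w; simp [mem_allW, and_comm]
  rw [sphereCount, show {w : List β // w ∈ L ∧ w.length = n} =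
    ↥{w : List β | w ∈ L ∧ w.length = n} from rfl, Nat.card_coe_set_eq, h,
    Set.ncard_coe_finset]

/-! ### The inverse letter -/

variable {X : Type*} [Fintype X]

def bar (a : X × Bool) : X × Bool := (a.1, !a.2)

lemma bar_bar (a : X × Bool) : bar (bar a) = a := by simp [bar]

lemma rel_iff {a b : X × Bool} : (a.1 = b.1 → a.2 = b.2) ↔ b ≠ bar a := by
  obtain ⟨x, u⟩ := a; obtain ⟨y, v⟩ := b
  simp only [bar, Prod.mk.injEq, ne_eq, not_and]
  constructor
  · intro h hxy hv
    have := h hxy.symm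
    subst hv
    simp at this
  · intro h hxy
    by_contra hne
    exact h hxy.symm (by revert hne; cases u <;> cases v <;> simp)

lemma rel_iff' {a b : X × Bool} : (a.1 = b.1 → a.2 = b.2) ↔ a ≠ bar b := by
  rw [rel_iff]
  constructor
  · intro h hab; apply h; rw [hab, bar_bar]
  · intro h hba; apply h; rw [hba, bar_bar]

lemma freelyReduced_append_singleton {w : List (X × Bool)} {c : X × Bool}
    (hw : FreelyReduced w) (hc : ∀ x ∈ w.getLast?, c ≠ bar x) :
    FreelyReduced (w ++ [c]) := by
  rw [FreelyReduced, List.Chain', List.isChain_append]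
  refine ⟨hw, List.isChain_singleton c, fun x hx y hy => ?_⟩
  simp only [head?_cons, Option.mem_some_iff] at hy
  subst hy
  exact rel_iff.2 (hc x hx)

lemma last_ne_of_reduced {w : List (X × Bool)} {c : X × Bool} (hw : w ≠ [])
    (h : FreelyReduced (w ++ [c])) : c ≠ bar (w.getLast hw) := by
  have h2 := (List.isChain_append.1 h).2.2 (w.getLast hw)
    (by rw [List.getLast?_eq_getLast_of_ne_nil hw]; rfl) c (by simp)
  exact rel_iff.1 h2

/-! ### Counting bounds -/

lemma card_univ_prod : Fintype.card (X × Bool) = Fintype.card X * 2 := by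
  simp [Fintype.card_prod]

lemma card_allowed_le (u : List (X × Bool)) (hu : u ≠ []) :
    (Finset.univ.filter fun c => FreelyReduced (u ++ [c])).card ≤ Fintype.card X * 2 - 1 := by
  have hsub : (Finset.univ.filter fun c => FreelyReduced (u ++ [c]))
      ⊆ Finset.univ.erase (bar (u.getLast hu)) := by
    intro c hc
    rw [Finset.mem_filter] at hc
    exact Finset.mem_erase.2 ⟨last_ne_of_reduced hu hc.2, Finset.mem_univ _⟩
  calc (Finset.univ.filter fun c => FreelyReduced (u ++ [c])).card
      ≤ (Finset.univ.erase (bar (u.getLast hu))).card := Finset.card_le_card hsub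
    _ = Fintype.card (X × Bool) - 1 := by
        rw [Finset.card_erase_of_mem (Finset.mem_univ _), Finset.card_univ]
    _ = Fintype.card X * 2 - 1 := by rw [card_univ_prod]

lemma card_ext_le : ∀ (t : ℕ) (u : List (X × Bool)), u ≠ [] →
    ((allW (X × Bool) t).filter fun e => FreelyReduced (u ++ e)).card
      ≤ (Fintype.card X * 2 - 1) ^ t := by
  intro t
  induction t with
  | zero =>
    intro u hu
    have hsub : ((allW (X × Bool) 0).filter fun e => FreelyReduced (u ++ e)) ⊆ {[]} := by
      intro e he
      rw [Finset.mem_filter, mem_allW] at he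
      simp [List.length_eq_zero_iff.1 he.1]
    simpa using Finset.card_le_card hsub
  | succ t ih =>
    intro u hu
    have hsub : ((allW (X × Bool) (t + 1)).filter fun e => FreelyReduced (u ++ e)) ⊆
        (Finset.univ.erase (bar (u.getLast hu))).biUnion (fun c =>
          ((allW (X × Bool) t).filter fun e => FreelyReduced ((u ++ [c]) ++ e)).image
            (fun e => c :: e)) := by
      intro e he
      rw [Finset.mem_filter, mem_allW] at he
      obtain ⟨hlen, hred⟩ := he
      cases e with
      | nil => simp at hlen
      | cons c e' =>
        have hred' : FreelyReduced ((u ++ [c]) ++ e') := by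
          rwa [List.append_assoc, List.singleton_append]
        have hc : c ≠ bar (u.getLast hu) := by
          refine last_ne_of_reduced hu (List.IsChain.prefix hred' ?_)
          exact (u ++ [c]).prefix_append e'
        refine Finset.mem_biUnion.2 ⟨c, Finset.mem_erase.2 ⟨hc, Finset.mem_univ _⟩, ?_⟩
        refine Finset.mem_image.2 ⟨e', Finset.mem_filter.2 ⟨mem_allW.2 ?_, hred'⟩, rfl⟩
        simpa using hlen
    calc ((allW (X × Bool) (t + 1)).filter fun e => FreelyReduced (u ++ e)).card
        ≤ _ := Finset.card_le_card hsub
      _ ≤ ∑ c ∈ Finset.univ.erase (bar (u.getLast hu)),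
            (((allW (X × Bool) t).filter fun e => FreelyReduced ((u ++ [c]) ++ e)).image
              (fun e => c :: e)).card := Finset.card_biUnion_le
      _ ≤ ∑ _c ∈ Finset.univ.erase (bar (u.getLast hu)), (Fintype.card X * 2 - 1) ^ t := by
          refine Finset.sum_le_sum fun c _ => ?_
          exact Finset.card_image_le.trans (ih (u ++ [c]) (by simp))
      _ = (Fintype.card X * 2 - 1) * (Fintype.card X * 2 - 1) ^ t := by
          rw [Finset.sum_const, Finset.card_erase_of_mem (Finset.mem_univ _),
            Finset.card_univ, card_univ_prod, smul_eq_mul]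
      _ = (Fintype.card X * 2 - 1) ^ (t + 1) := (pow_succ' _ _).symm

lemma card_red_ge (hX : 2 ≤ Fintype.card X) :
    ∀ n : ℕ, (Fintype.card X * 2 - 1) ^ n
      ≤ ((allW (X × Bool) n).filter (fun w => FreelyReduced w)).card := by
  intro n
  induction n with
  | zero =>
    have : ([] : List (X × Bool)) ∈ (allW (X × Bool) 0).filter (fun w => FreelyReduced w) := by
      rw [Finset.mem_filter, mem_allW]
      exact ⟨rfl, List.isChain_nil⟩
    simpa using Finset.card_pos.2 ⟨[], this⟩
  | succ n ih =>
    set D := Fintype.card X * 2 - 1 with hD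
    set F := (allW (X × Bool) n).filter (fun w => FreelyReduced w) with hF
    set B := F.biUnion (fun w =>
      (Finset.univ.filter (fun c => FreelyReduced (w ++ [c]))).image (fun c => w ++ [c])) with hB
    have hBsub : B ⊆ (allW (X × Bool) (n + 1)).filter (fun w => FreelyReduced w) := by
      intro x hx
      obtain ⟨w, hw, hx⟩ := Finset.mem_biUnion.1 hx
      obtain ⟨c, hc, rfl⟩ := Finset.mem_image.1 hx
      rw [Finset.mem_filter] at hw hc ⊢
      rw [mem_allW] at hw ⊢
      exact ⟨by simp [hw.1], hc.2⟩
    have hdisj : ∀ w₁ ∈ F, ∀ w₂ ∈ F, w₁ ≠ w₂ → Disjoint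
        ((Finset.univ.filter (fun c => FreelyReduced (w₁ ++ [c]))).image (fun c => w₁ ++ [c]))
        ((Finset.univ.filter (fun c => FreelyReduced (w₂ ++ [c]))).image (fun c => w₂ ++ [c])) := by
      intro w₁ h₁ w₂ h₂ hne
      rw [Finset.disjoint_left]
      intro x hx1 hx2
      obtain ⟨c₁, _, rfl⟩ := Finset.mem_image.1 hx1
      obtain ⟨c₂, _, heq⟩ := Finset.mem_image.1 hx2
      have hlen : w₁.length = w₂.length := by
        rw [Finset.mem_filter, mem_allW] at h₁ h₂
        rw [h₁.1, h₂.1]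
      exact hne (List.append_inj_left heq.symm hlen)
    have hper : ∀ w ∈ F, D ≤
        ((Finset.univ.filter (fun c => FreelyReduced (w ++ [c]))).image (fun c => w ++ [c])).card := by
      intro w hw
      have hwred : FreelyReduced w := (Finset.mem_filter.1 hw).2
      have hinj : Set.InjOn (fun c => w ++ [c])
          ↑(Finset.univ.filter (fun c => FreelyReduced (w ++ [c]))) := by
        intro c₁ _ c₂ _ h
        have := List.append_cancel_left h
        simpa using this
      rw [Finset.card_image_of_injOn hinj]
      have hcompl : (Finset.univ.filter (fun c => ¬ FreelyReduced (w ++ [c]))).card ≤ 1 := by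
        have hsub : (Finset.univ.filter (fun c => ¬ FreelyReduced (w ++ [c])))
            ⊆ (w.getLast?.map bar).toFinset := by
          intro c hc
          rw [Finset.mem_filter] at hc
          by_contra hnot
          apply hc.2
          apply freelyReduced_append_singleton hwred
          intro x hx hceq
          apply hnot
          simp only [Option.mem_toFinset, Option.mem_map]
          exact ⟨x, hx, hceq.symm⟩
        refine (Finset.card_le_card hsub).trans ?_
        cases w.getLast? <;> simp
      have htot := Finset.card_filter_add_card_filter_not
        (s := (Finset.univ : Finset (X × Bool))) (p := fun c => FreelyReduced (w ++ [c]))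
      have hcard : (Finset.univ : Finset (X × Bool)).card = Fintype.card X * 2 := by
        rw [Finset.card_univ, card_univ_prod]
      omega
    have hcount : F.card * D ≤ B.card := by
      rw [hB, Finset.card_biUnion hdisj]
      calc F.card * D = ∑ _w ∈ F, D := by rw [Finset.sum_const, smul_eq_mul]
        _ ≤ _ := Finset.sum_le_sum hper
    calc D ^ (n + 1) = D ^ n * D := (pow_succ _ _)
      _ ≤ F.card * D := Nat.mul_le_mul_right D ih
      _ ≤ B.card := hcount
      _ ≤ _ := Finset.card_le_card hBsub

/-! ### The avoiding language -/

noncomputable def Fav (s : List (X × Bool)) (n : ℕ) : Finset (List (X × Bool)) :=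
  (allW (X × Bool) n).filter (fun w => FreelyReduced w ∧ ¬ s <:+: w)

lemma card_Fav_step (s : List (X × Bool)) (n t : ℕ) (hn : 1 ≤ n) (B : ℕ)
    (hB : ∀ u : List (X × Bool), u ≠ [] → FreelyReduced u →
      ((allW (X × Bool) t).filter fun e => FreelyReduced (u ++ e) ∧ ¬ s <:+: (u ++ e)).card ≤ B) :
    (Fav s (n + t)).card ≤ B * (Fav s n).card := by
  classical
  have hfiber : ∀ u ∈ (Fav s (n + t)).image (fun w => w.take n),
      ((Fav s (n + t)).filter (fun x => x.take n = u)).card ≤ B := by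
    intro u hu
    obtain ⟨x₀, hx₀, rfl⟩ := Finset.mem_image.1 hu
    rw [Fav, Finset.mem_filter, mem_allW] at hx₀
    obtain ⟨hlen₀, hred₀, _⟩ := hx₀
    have hulen : (x₀.take n).length = n := by
      rw [List.length_take, hlen₀]; omega
    have hune : x₀.take n ≠ [] := by
      intro h; rw [h] at hulen; simp at hulen; omega
    have hured : FreelyReduced (x₀.take n) := hred₀.prefix (List.take_prefix n x₀)
    refine (Finset.card_le_card_of_injOn (fun x => x.drop n) ?_ ?_).trans
      (hB (x₀.take n) hune hured)
    · intro x hx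
      rw [Finset.mem_coe, Finset.mem_filter] at hx
      obtain ⟨hx, htake⟩ := hx
      rw [Fav, Finset.mem_filter, mem_allW] at hx
      obtain ⟨hlen, hred, havd⟩ := hx
      rw [Finset.mem_coe, Finset.mem_filter, mem_allW]
      have hxeq : x₀.take n ++ x.drop n = x := by rw [← htake, List.take_append_drop]
      refine ⟨by rw [List.length_drop, hlen]; omega, ?_, ?_⟩
      · rwa [hxeq]
      · rwa [hxeq]
    · intro x₁ hx₁ x₂ hx₂ h
      have h' : x₁.drop n = x₂.drop n := h
      rw [Finset.coe_filter, Set.mem_setOf_eq] at hx₁ hx₂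
      calc x₁ = x₁.take n ++ x₁.drop n := (List.take_append_drop n x₁).symm
        _ = x₂.take n ++ x₂.drop n := by rw [hx₁.2, hx₂.2, h']
        _ = x₂ := List.take_append_drop n x₂
  have himg : (Fav s (n + t)).image (fun w => w.take n) ⊆ Fav s n := by
    intro u hu
    obtain ⟨x, hx, rfl⟩ := Finset.mem_image.1 hu
    rw [Fav, Finset.mem_filter, mem_allW] at hx ⊢
    obtain ⟨hlen, hred, havd⟩ := hx
    refine ⟨by rw [List.length_take, hlen]; omega, hred.prefix (List.take_prefix n x), ?_⟩
    intro hinf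
    exact havd (hinf.trans (List.take_prefix n x).isInfix)
  calc (Fav s (n + t)).card ≤ B * ((Fav s (n + t)).image (fun w => w.take n)).card :=
        Finset.card_le_mul_card_image _ B hfiber
    _ ≤ B * (Fav s n).card := Nat.mul_le_mul_left B (Finset.card_le_card himg)

lemma bound_one (s : List (X × Bool)) (u : List (X × Bool)) (hu : u ≠ []) :
    ((allW (X × Bool) 1).filter fun e => FreelyReduced (u ++ e) ∧ ¬ s <:+: (u ++ e)).card
      ≤ Fintype.card X * 2 - 1 := by
  have hsub : ((allW (X × Bool) 1).filter fun e => FreelyReduced (u ++ e) ∧ ¬ s <:+: (u ++ e))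
      ⊆ ((allW (X × Bool) 1).filter fun e => FreelyReduced (u ++ e)) := by
    intro e he
    rw [Finset.mem_filter] at he ⊢
    exact ⟨he.1, he.2.1⟩
  refine (Finset.card_le_card hsub).trans ?_
  simpa using card_ext_le 1 u hu

lemma bound_block (hX : 2 ≤ Fintype.card X) (s : List (X × Bool)) (hs : FreelyReduced s)
    (hsne : s ≠ []) (u : List (X × Bool)) (hu : u ≠ []) (hured : FreelyReduced u) :
    ((allW (X × Bool) (s.length + 1)).filter
        fun e => FreelyReduced (u ++ e) ∧ ¬ s <:+: (u ++ e)).card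
      ≤ (Fintype.card X * 2 - 1) ^ (s.length + 1) - (Fintype.card X * 2 - 2) := by
  classical
  set p := s.length + 1 with hp
  set Er := (allW (X × Bool) p).filter (fun e => FreelyReduced (u ++ e)) with hEr
  set C := Finset.univ.filter (fun c => FreelyReduced (u ++ (c :: s))) with hC
  set S := C.image (fun c => c :: s) with hS
  have hSsub : S ⊆ Er := by
    intro e he
    obtain ⟨c, hc, rfl⟩ := Finset.mem_image.1 he
    rw [Finset.mem_filter] at hc
    rw [hEr, Finset.mem_filter, mem_allW]
    exact ⟨by simp [hp], hc.2⟩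
  have hG : ((allW (X × Bool) p).filter
      fun e => FreelyReduced (u ++ e) ∧ ¬ s <:+: (u ++ e)) ⊆ Er \ S := by
    intro e he
    rw [Finset.mem_filter] at he
    obtain ⟨hmem, hred, havd⟩ := he
    rw [Finset.mem_sdiff]
    refine ⟨Finset.mem_filter.2 ⟨hmem, hred⟩, ?_⟩
    intro heS
    obtain ⟨c, _, rfl⟩ := Finset.mem_image.1 heS
    exact havd (((List.suffix_cons c s).trans (List.suffix_append u (c :: s))).isInfix)
  have hCcard : Fintype.card X * 2 - 2 ≤ C.card := by
    have hsub2 : Finset.univ.filter (fun c => ¬ FreelyReduced (u ++ (c :: s)))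
        ⊆ {bar (u.getLast hu), bar (s.head hsne)} := by
      intro c hc
      rw [Finset.mem_filter] at hc
      by_contra hnot
      rw [Finset.mem_insert, Finset.mem_singleton] at hnot
      push_neg at hnot
      apply hc.2
      rw [FreelyReduced, List.Chain', List.isChain_append]
      refine ⟨hured, ?_, ?_⟩
      · rw [List.isChain_cons]
        refine ⟨fun y hy => ?_, hs⟩
        have hyh : y = s.head hsne := by
          rw [List.head?_eq_head hsne, Option.mem_some_iff] at hy
          exact hy.symm
        subst hyh
        exact rel_iff'.2 hnot.2
      · intro x hx y hy
        rw [List.getLast?_eq_getLast_of_ne_nil hu, Option.mem_some_iff] at hx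
        simp only [head?_cons, Option.mem_some_iff] at hy
        subst hx; subst hy
        exact rel_iff.2 hnot.1
    have h2 : (Finset.univ.filter (fun c => ¬ FreelyReduced (u ++ (c :: s)))).card ≤ 2 := by
      refine (Finset.card_le_card hsub2).trans ?_
      exact (Finset.card_insert_le _ _).trans (by simp)
    have htot := Finset.card_filter_add_card_filter_not
      (s := (Finset.univ : Finset (X × Bool))) (p := fun c => FreelyReduced (u ++ (c :: s)))
    have hcard : (Finset.univ : Finset (X × Bool)).card = Fintype.card X * 2 := by
      rw [Finset.card_univ, card_univ_prod]
    rw [hC]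
    omega
  have hScard : S.card = C.card := by
    rw [hS]
    apply Finset.card_image_of_injOn
    intro c₁ _ c₂ _ h
    simpa using h
  have hErcard : Er.card ≤ (Fintype.card X * 2 - 1) ^ p := card_ext_le p u hu
  calc ((allW (X × Bool) p).filter
      fun e => FreelyReduced (u ++ e) ∧ ¬ s <:+: (u ++ e)).card
      ≤ (Er \ S).card := Finset.card_le_card hG
    _ = Er.card - S.card := Finset.card_sdiff_of_subset hSsub
    _ ≤ (Fintype.card X * 2 - 1) ^ p - (Fintype.card X * 2 - 2) := by
        have hSc : Fintype.card X * 2 - 2 ≤ S.card := by rw [hScard]; exact hCcard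
        omega

end Stmt8Aux

open Stmt8Aux

/-- Infinite monkey theorem for reduced words: if some reduced word `s` never occurs
as a factor of a word in `L ⊆ Red(X)`, then `D(L | Red(X)) = 0`. -/
theorem stmt8 {X : Type*} [Fintype X] (hX : 2 ≤ Fintype.card X)
    (L : Set (List (X × Bool))) (hL : L ⊆ Red X)
    (s : List (X × Bool)) (hs : FreelyReduced s)
    (havoid : ∀ w ∈ L, ¬ s <:+: w) :
    Filter.Tendsto (relRatio L (Red X)) Filter.atTop (nhds 0) := by
  classical
  by_cases hsnil : s = []
  · -- s = [] : then L = ∅ and the ratio is constantly 0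
    have hL0 : ∀ n, sphereCount L n = 0 := by
      intro n
      have : IsEmpty {w : List (X × Bool) // w ∈ L ∧ w.length = n} := by
        refine ⟨fun x => ?_⟩
        obtain ⟨w, hw, _⟩ := x
        exact havoid w hw (by rw [hsnil]; exact List.nil_infix)
      rw [sphereCount, Nat.card_of_isEmpty]
    have : relRatio L (Red X) = fun _ => 0 := by
      funext n; rw [relRatio, hL0]; simp
    rw [this]
    exact tendsto_const_nhds
  -- main case
  set D := Fintype.card X * 2 - 1 with hD
  set p := s.length + 1 with hp
  set q := D ^ p - (Fintype.card X * 2 - 2) with hq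
  have hD3 : 3 ≤ D := by omega
  have hp1 : 1 ≤ p := by omega
  have hqlt : q < D ^ p := by
    have h1 : 0 < D ^ p := Nat.pow_pos (by omega)
    have h2 : 0 < Fintype.card X * 2 - 2 := by omega
    exact Nat.sub_lt h1 h2
  -- counting facts
  have hA : ∀ n, sphereCount L n ≤ (Fav s n).card := by
    intro n
    rw [sphereCount_eq]
    apply Finset.card_le_card
    intro w hw
    rw [Finset.mem_filter] at hw
    rw [Fav, Finset.mem_filter]
    exact ⟨hw.1, hL hw.2, havoid w hw.2⟩
  have hR : ∀ n, D ^ n ≤ sphereCount (Red X) n := by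
    intro n
    rw [sphereCount_eq]
    have : ((allW (X × Bool) n).filter (fun w => w ∈ Red X))
        = ((allW (X × Bool) n).filter (fun w => FreelyReduced w)) := by
      apply Finset.filter_congr
      intro w _
      rfl
    rw [this]
    exact card_red_ge hX n
  have h1 : ∀ n, 1 ≤ n → (Fav s (n + 1)).card ≤ D * (Fav s n).card := by
    intro n hn
    exact card_Fav_step s n 1 hn D (fun u hu _ => bound_one s u hu)
  have h2 : ∀ n, 1 ≤ n → (Fav s (n + p)).card ≤ q * (Fav s n).card := by
    intro n hn
    exact card_Fav_step s n p hn q (fun u hu hured =>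
      bound_block hX s hs hsnil u hu hured)
  -- iterate
  have hiter2 : ∀ t m, 1 ≤ m → (Fav s (m + t)).card ≤ D ^ t * (Fav s m).card := by
    intro t
    induction t with
    | zero => intro m _; simp
    | succ t ih =>
      intro m hm
      have : m + (t + 1) = (m + t) + 1 := by omega
      rw [this]
      calc (Fav s ((m + t) + 1)).card ≤ D * (Fav s (m + t)).card := h1 (m + t) (by omega)
        _ ≤ D * (D ^ t * (Fav s m).card) := Nat.mul_le_mul_left D (ih m hm)
        _ = D ^ (t + 1) * (Fav s m).card := by ring
  have hiter1 : ∀ j, (Fav s (1 + j * p)).card ≤ q ^ j * (Fav s 1).card := by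
    intro j
    induction j with
    | zero => simp
    | succ j ih =>
      have : 1 + (j + 1) * p = (1 + j * p) + p := by ring
      rw [this]
      calc (Fav s ((1 + j * p) + p)).card ≤ q * (Fav s (1 + j * p)).card :=
            h2 (1 + j * p) (by omega)
        _ ≤ q * (q ^ j * (Fav s 1).card) := Nat.mul_le_mul_left q ih
        _ = q ^ (j + 1) * (Fav s 1).card := by ring
  have hmain : ∀ n, 1 ≤ n →
      (Fav s n).card ≤ D ^ ((n - 1) % p) * q ^ ((n - 1) / p) * (Fav s 1).card := by
    intro n hn
    set j := (n - 1) / p with hj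
    set t := (n - 1) % p with ht
    have hnt : n = (1 + j * p) + t := by
      have h := Nat.div_add_mod (n - 1) p
      have h2 : p * ((n - 1) / p) = j * p := by rw [hj, Nat.mul_comm]
      omega
    calc (Fav s n).card = (Fav s ((1 + j * p) + t)).card := by rw [← hnt]
      _ ≤ D ^ t * (Fav s (1 + j * p)).card := hiter2 t (1 + j * p) (by omega)
      _ ≤ D ^ t * (q ^ j * (Fav s 1).card) := Nat.mul_le_mul_left _ (hiter1 j)
      _ = D ^ t * q ^ j * (Fav s 1).card := by ring
  -- the real bound
  set θ : ℝ := (q : ℝ) / (D : ℝ) ^ p with hθ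
  have hDpos : (0 : ℝ) < (D : ℝ) := by exact_mod_cast (by omega : 0 < D)
  have hθ0 : 0 ≤ θ := div_nonneg (by positivity) (by positivity)
  have hθ1 : θ < 1 := by
    rw [hθ, div_lt_one (by positivity)]
    exact_mod_cast hqlt
  have hbound : ∀ n, 1 ≤ n → relRatio L (Red X) n
      ≤ ((Fav s 1).card : ℝ) * θ ^ ((n - 1) / p) := by
    intro n hn
    set j := (n - 1) / p with hj
    set t := (n - 1) % p with ht
    have hnt : n = 1 + j * p + t := by
      have h := Nat.div_add_mod (n - 1) p
      have h2 : p * ((n - 1) / p) = j * p := by rw [hj, Nat.mul_comm]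
      omega
    have hDn : (0 : ℝ) < (D : ℝ) ^ n := by positivity
    have hRn : (D : ℝ) ^ n ≤ (sphereCount (Red X) n : ℝ) := by
      exact_mod_cast hR n
    have hRpos : (0 : ℝ) < (sphereCount (Red X) n : ℝ) := lt_of_lt_of_le hDn hRn
    have step1 : relRatio L (Red X) n ≤ ((Fav s n).card : ℝ) / (D : ℝ) ^ n := by
      rw [relRatio]
      have hnum : (sphereCount L n : ℝ) ≤ ((Fav s n).card : ℝ) := by exact_mod_cast hA n
      exact div_le_div₀ (Nat.cast_nonneg _) hnum hDn hRn
    have step2 : ((Fav s n).card : ℝ) ≤ (D : ℝ) ^ t * (q : ℝ) ^ j * ((Fav s 1).card : ℝ) := by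
      have := hmain n hn
      exact_mod_cast this
    have hDnsplit : (D : ℝ) ^ n = (D : ℝ) * ((D : ℝ) ^ p) ^ j * (D : ℝ) ^ t := by
      rw [hnt]; ring
    calc relRatio L (Red X) n ≤ ((Fav s n).card : ℝ) / (D : ℝ) ^ n := step1
      _ ≤ ((D : ℝ) ^ t * (q : ℝ) ^ j * ((Fav s 1).card : ℝ)) / (D : ℝ) ^ n :=
          (div_le_div_iff_of_pos_right hDn).2 step2
      _ = ((Fav s 1).card : ℝ) * θ ^ j / (D : ℝ) := by
          rw [hDnsplit, hθ, div_pow, mul_div_assoc', div_div,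
            div_eq_div_iff (by positivity) (by positivity)]
          ring
      _ ≤ ((Fav s 1).card : ℝ) * θ ^ j := by
          rw [div_le_iff₀ hDpos]
          have h1 : (1 : ℝ) ≤ (D : ℝ) := by exact_mod_cast (by omega : 1 ≤ D)
          nlinarith [mul_nonneg (Nat.cast_nonneg (Fav s 1).card) (pow_nonneg hθ0 j)]
  -- the squeeze
  have hdiv : Filter.Tendsto (fun n : ℕ => (n - 1) / p) Filter.atTop Filter.atTop := by
    rw [Filter.tendsto_atTop_atTop]
    intro b
    refine ⟨(b + 1) * p + 1, fun n hn => ?_⟩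
    have hexp : (b + 1) * p = b * p + p := by ring
    rw [Nat.le_div_iff_mul_le (by omega : 0 < p)]
    omega
  have hupper : Filter.Tendsto (fun n : ℕ => ((Fav s 1).card : ℝ) * θ ^ ((n - 1) / p))
      Filter.atTop (nhds 0) := by
    have := (tendsto_pow_atTop_nhds_zero_of_lt_one hθ0 hθ1).comp hdiv
    simpa using this.const_mul ((Fav s 1).card : ℝ)
  have hlower : ∀ n, (0 : ℝ) ≤ relRatio L (Red X) n := by
    intro n
    exact div_nonneg (Nat.cast_nonneg _) (Nat.cast_nonneg _)
  refine tendsto_of_tendsto_of_tendsto_of_le_of_le' tendsto_const_nhds hupper ?_ ?_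
  · exact Filter.Eventually.of_forall hlower
  · filter_upwards [Filter.eventually_ge_atTop 1] with n hn
    exact hbound n hn
end

section
/- Let L ⊆ Red(X) be a regular language of reduced words (|X| ≥ 2) with D_sup(L | Red(X)) = 0, and let N = {w ∈ Red(X) : Σ* w Σ* ∩ L ≠ ∅} be the set of reduced factors of words in L. Then D_sup(N | Red(X)) = 0. -/
open Filter Topology

def RegularLang {A : Type*} (L : Set (List A)) : Prop :=
  ∃ (σ : Type) (_ : Fintype σ) (M : DFA A σ), M.accepts = L

/-! ### Auxiliary lemmas -/

lemma finite_sphere {A : Type*} [Fintype A] (L : Set (List A)) (n : ℕ) :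
    Finite {w : List A // w ∈ L ∧ w.length = n} :=
  ((List.finite_length_eq A n).subset (fun _ hw => hw.2)).to_subtype

lemma sphereCount_mono {A : Type*} [Fintype A] {L M : Set (List A)} (h : L ⊆ M) (n : ℕ) :
    sphereCount L n ≤ sphereCount M n := by
  have := finite_sphere M n
  exact Nat.card_le_card_of_injective (fun w => ⟨w.1, h w.2.1, w.2.2⟩)
    (fun a b hab => by cases a; cases b; simpa [Subtype.ext_iff] using hab)

lemma chain'_replicate' {α : Type*} {r : α → α → Prop} {a : α} (h : r a a) (n : ℕ) :
    List.Chain' r (List.replicate n a) := by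
  induction n with
  | zero => exact List.isChain_nil
  | succ n ih =>
    rw [List.replicate_succ]; show List.IsChain r _; rw [List.isChain_cons]
    exact ⟨fun y hy => by
      cases n with
      | zero => simp at hy
      | succ m => simp [List.replicate_succ] at hy; subst hy; exact h, ih⟩

lemma red_pos {X : Type*} [Fintype X] (hX : 2 ≤ Fintype.card X) (n : ℕ) :
    0 < sphereCount (Red X) n := by
  have : Nonempty X := Fintype.card_pos_iff.mp (by omega)
  obtain ⟨x⟩ := this
  have : Nonempty {w : List (X × Bool) // w ∈ Red X ∧ w.length = n} :=
    ⟨⟨List.replicate n (x, true), chain'_replicate' (fun _ => rfl) n, by simp⟩⟩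
  have := finite_sphere (Red X) n
  exact Nat.card_pos

lemma red_step {X : Type*} [Fintype X] (n : ℕ) :
    sphereCount (Red X) (n + 1) ≤ sphereCount (Red X) n * (2 * Fintype.card X + 1) := by
  classical
  have hfin := finite_sphere (Red X) n
  have hcard : Nat.card ({w : List (X × Bool) // w ∈ Red X ∧ w.length = n} × Option (X × Bool))
      = sphereCount (Red X) n * (2 * Fintype.card X + 1) := by
    have ho : Nat.card (Option (X × Bool)) = 2 * Fintype.card X + 1 := by
      simp [Nat.card_eq_fintype_card]; ring
    rw [Nat.card_prod, ho, sphereCount]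
  rw [sphereCount, ← hcard]
  refine Nat.card_le_card_of_injective
    (fun w => (⟨w.1.tail, (w.2.1 : List.Chain' _ w.1).tail, by
        have := w.2.2; simp [List.length_tail, this]⟩, w.1.head?)) ?_
  rintro ⟨w₁, hw₁, hl₁⟩ ⟨w₂, hw₂, hl₂⟩ hab
  simp only [Prod.mk.injEq, Subtype.mk.injEq] at hab
  obtain ⟨ht, hh⟩ := hab
  have h₁ : w₁ ≠ [] := by intro h; subst h; simp at hl₁
  have h₂ : w₂ ≠ [] := by intro h; subst h; simp at hl₂
  have hhd : w₁.head h₁ = w₂.head h₂ := by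
    rw [List.head?_eq_head h₁, List.head?_eq_head h₂] at hh
    exact Option.some.inj hh
  ext1
  dsimp only
  rw [← List.cons_head_tail h₁, ← List.cons_head_tail h₂, ht, hhd]

lemma red_pow {X : Type*} [Fintype X] (n i : ℕ) :
    sphereCount (Red X) (n + i) ≤ sphereCount (Red X) n * (2 * Fintype.card X + 1) ^ i := by
  induction i with
  | zero => simp
  | succ i ih =>
    calc sphereCount (Red X) (n + (i + 1)) = sphereCount (Red X) ((n + i) + 1) := by ring_nf
      _ ≤ sphereCount (Red X) (n + i) * (2 * Fintype.card X + 1) := red_step _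
      _ ≤ sphereCount (Red X) n * (2 * Fintype.card X + 1) ^ i * (2 * Fintype.card X + 1) :=
          Nat.mul_le_mul_right _ ih
      _ = sphereCount (Red X) n * (2 * Fintype.card X + 1) ^ (i + 1) := by ring

theorem exists_short_evalFrom {A σ : Type*} [Fintype σ] (M : DFA A σ) (s : σ) (b : List A) :
    ∃ b', b'.length ≤ Fintype.card σ ∧ M.evalFrom s b' = M.evalFrom s b := by
  generalize hn : b.length = n
  induction n using Nat.strong_induction_on generalizing b with
  | _ n ih =>
    subst hn
    by_cases h : b.length ≤ Fintype.card σ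
    · exact ⟨b, h, rfl⟩
    · push_neg at h
      obtain ⟨q, a, c, d, hx, hlen, hc, h1, h2, h3⟩ := M.evalFrom_split (x := b) (s := s)
        (t := M.evalFrom s b) h.le rfl
      have hlt : (a ++ d).length < b.length := by
        rw [hx]; simp only [List.length_append]
        have := List.length_pos_iff.mpr hc
        omega
      obtain ⟨b', hb1, hb2⟩ := ih (a ++ d).length hlt (a ++ d) rfl
      refine ⟨b', hb1, ?_⟩
      rw [hb2, DFA.evalFrom_of_append, h1, h3]

lemma short_witness {A σ : Type*} [Fintype σ] (M : DFA A σ) {w a b : List A}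
    (h : a ++ w ++ b ∈ M.accepts) :
    ∃ p : List A × List A, p.1.length ≤ Fintype.card σ ∧ p.2.length ≤ Fintype.card σ ∧
      p.1 ++ w ++ p.2 ∈ M.accepts := by
  obtain ⟨a', ha1, ha2⟩ := exists_short_evalFrom M M.start a
  obtain ⟨b', hb1, hb2⟩ := exists_short_evalFrom M (M.evalFrom (M.evalFrom M.start a) w) b
  refine ⟨(a', b'), ha1, hb1, ?_⟩
  rw [DFA.mem_accepts] at h ⊢
  simpa [DFA.eval, DFA.evalFrom_of_append, ha2, hb2] using h

lemma nat_card_sigma {ι : Type*} [Fintype ι] {α : ι → Type*} [∀ i, Finite (α i)] :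
    Nat.card ((i : ι) × α i) = ∑ i, Nat.card (α i) := by
  letI : ∀ i, Fintype (α i) := fun i => Fintype.ofFinite _
  rw [Nat.card_eq_fintype_card, Fintype.card_sigma]
  exact Finset.sum_congr rfl fun i _ => (Nat.card_eq_fintype_card).symm

lemma count_factor {A σ : Type*} [Fintype A] [Fintype σ] (M : DFA A σ) (n : ℕ) :
    sphereCount {w | ∃ a b : List A, a ++ w ++ b ∈ M.accepts} n ≤
      (∑ i ∈ Finset.range (2 * Fintype.card σ + 1),
        sphereCount M.accepts (n + i)) * (Fintype.card σ + 1) := by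
  classical
  set C := Fintype.card σ with hC
  haveI : ∀ i : Fin (2 * C + 1), Finite {u : List A // u ∈ M.accepts ∧ u.length = n + ↑i} :=
    fun i => finite_sphere _ _
  have hcard : Nat.card (((i : Fin (2 * C + 1)) ×
        {u : List A // u ∈ M.accepts ∧ u.length = n + ↑i}) × Fin (C + 1)) =
      (∑ i ∈ Finset.range (2 * C + 1), sphereCount M.accepts (n + i)) * (C + 1) := by
    rw [Nat.card_prod, nat_card_sigma, Nat.card_eq_fintype_card, Fintype.card_fin,
      ← Fin.sum_univ_eq_sum_range (fun i => sphereCount M.accepts (n + i))]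
    rfl
  rw [sphereCount, ← hcard]
  have key : ∀ w : {w : List A // w ∈ {w | ∃ a b : List A, a ++ w ++ b ∈ M.accepts} ∧
      w.length = n}, ∃ p : List A × List A, p.1.length ≤ C ∧ p.2.length ≤ C ∧
      p.1 ++ w.1 ++ p.2 ∈ M.accepts := by
    rintro ⟨w, ⟨a, b, hab⟩, hlen⟩
    exact short_witness M hab
  choose p hp1 hp2 hp3 using key
  refine Nat.card_le_card_of_injective (fun w =>
    (⟨⟨(p w).1.length + (p w).2.length, by have := hp1 w; have := hp2 w; omega⟩,
      ⟨(p w).1 ++ w.1 ++ (p w).2, hp3 w, by simp [List.length_append, w.2.2]; omega⟩⟩,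
     ⟨(p w).1.length, by have := hp1 w; omega⟩)) ?_
  intro w₁ w₂ h
  have hla : (p w₁).1.length = (p w₂).1.length := by
    simpa using congrArg (fun t => (t.2 : ℕ)) h
  have hu : (p w₁).1 ++ w₁.1 ++ (p w₁).2 = (p w₂).1 ++ w₂.1 ++ (p w₂).2 := by
    simpa using congrArg (fun t => t.1.snd.val) h
  have e₁ : (((p w₁).1 ++ w₁.1 ++ (p w₁).2).drop (p w₁).1.length).take n = w₁.1 := by
    rw [List.append_assoc, List.drop_left]; exact List.take_left' w₁.2.2
  have e₂ : (((p w₂).1 ++ w₂.1 ++ (p w₂).2).drop (p w₂).1.length).take n = w₂.1 := by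
    rw [List.append_assoc, List.drop_left]; exact List.take_left' w₂.2.2
  apply Subtype.ext
  rw [← e₁, ← e₂, hu, hla]

set_option maxHeartbeats 1000000 in
/-- If a regular language `L ⊆ Red(X)` has null limsup density, so does the set `N`
of reduced words occurring as factors of words of `L`. -/
theorem stmt12 {X : Type*} [Fintype X] (hX : 2 ≤ Fintype.card X)
    (L : Set (List (X × Bool))) (hL : L ⊆ Red X) (hreg : RegularLang L)
    (hnull : Filter.limsup (relRatio L (Red X)) Filter.atTop = 0) :
    Filter.limsup
      (relRatio {w | FreelyReduced w ∧ ∃ a b : List (X × Bool), a ++ w ++ b ∈ L} (Red X))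
      Filter.atTop = 0 := by
  classical
  obtain ⟨σ, hσ, M, hM⟩ := hreg
  haveI := hσ
  set C := Fintype.card σ with hCdef
  set K := 2 * Fintype.card X + 1 with hKdef
  set N : Set (List (X × Bool)) :=
    {w | FreelyReduced w ∧ ∃ a b : List (X × Bool), a ++ w ++ b ∈ L} with hNdef
  have hRpos : ∀ n, (0 : ℝ) < (sphereCount (Red X) n : ℝ) := fun n => by
    exact_mod_cast red_pos hX n
  set f := relRatio L (Red X) with hfdef
  have hf0 : ∀ n, 0 ≤ f n := fun n => div_nonneg (by positivity) (le_of_lt (hRpos n))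
  have hf1 : ∀ n, f n ≤ 1 := fun n => by
    rw [hfdef, relRatio, div_le_one (hRpos n)]
    exact_mod_cast sphereCount_mono hL n
  have hbdd : IsBoundedUnder (· ≤ ·) atTop f :=
    ⟨1, Filter.eventually_map.mpr (Filter.Eventually.of_forall hf1)⟩
  have hbdd' : IsBoundedUnder (· ≥ ·) atTop f :=
    ⟨0, Filter.eventually_map.mpr (Filter.Eventually.of_forall hf0)⟩
  have hliminf : liminf f atTop = 0 := by
    apply le_antisymm
    · calc liminf f atTop ≤ limsup f atTop := liminf_le_limsup hbdd hbdd'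
        _ = 0 := hnull
    · exact le_liminf_of_le hbdd.isCoboundedUnder_ge (Filter.Eventually.of_forall hf0)
  have hftend : Tendsto f atTop (𝓝 0) := tendsto_of_liminf_eq_limsup hliminf hnull hbdd hbdd'
  have hfR : ∀ m, (sphereCount L m : ℝ) = f m * (sphereCount (Red X) m : ℝ) := fun m => by
    rw [hfdef, relRatio, div_mul_cancel₀]
    exact ne_of_gt (hRpos m)
  -- the key pointwise bound
  have hkey : ∀ n, relRatio N (Red X) n ≤
      ((C : ℝ) + 1) * (K : ℝ) ^ (2 * C) * ∑ i ∈ Finset.range (2 * C + 1), f (n + i) := by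
    intro n
    rw [relRatio, div_le_iff₀ (hRpos n)]
    have hsub : N ⊆ {w | ∃ a b : List (X × Bool), a ++ w ++ b ∈ M.accepts} := by
      rw [hM]; exact fun w hw => hw.2
    have h1 : sphereCount N n ≤
        (∑ i ∈ Finset.range (2 * C + 1), sphereCount L (n + i)) * (C + 1) := by
      refine le_trans (sphereCount_mono hsub n) ?_
      simpa [hM] using count_factor M n
    have h1' : (sphereCount N n : ℝ) ≤
        (∑ i ∈ Finset.range (2 * C + 1), (sphereCount L (n + i) : ℝ)) * ((C : ℝ) + 1) := by
      exact_mod_cast h1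
    have h2 : ∀ i ∈ Finset.range (2 * C + 1), (sphereCount L (n + i) : ℝ) ≤
        f (n + i) * ((sphereCount (Red X) n : ℝ) * (K : ℝ) ^ (2 * C)) := by
      intro i hi
      rw [hfR (n + i)]
      refine mul_le_mul_of_nonneg_left ?_ (hf0 _)
      have hr1 : sphereCount (Red X) (n + i) ≤ sphereCount (Red X) n * K ^ i := red_pow n i
      have hi' : i ≤ 2 * C := by simp only [Finset.mem_range] at hi; omega
      have hr2 : K ^ i ≤ K ^ (2 * C) := Nat.pow_le_pow_right (by omega) hi'
      calc (sphereCount (Red X) (n + i) : ℝ)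
          ≤ ((sphereCount (Red X) n * K ^ (2 * C) : ℕ) : ℝ) := by
            exact_mod_cast le_trans hr1 (Nat.mul_le_mul_left _ hr2)
        _ = (sphereCount (Red X) n : ℝ) * (K : ℝ) ^ (2 * C) := by push_cast; ring
    calc (sphereCount N n : ℝ)
        ≤ (∑ i ∈ Finset.range (2 * C + 1), (sphereCount L (n + i) : ℝ)) * ((C : ℝ) + 1) := h1'
      _ ≤ (∑ i ∈ Finset.range (2 * C + 1),
            f (n + i) * ((sphereCount (Red X) n : ℝ) * (K : ℝ) ^ (2 * C))) * ((C : ℝ) + 1) := by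
          exact mul_le_mul_of_nonneg_right (Finset.sum_le_sum h2) (by positivity)
      _ = ((C : ℝ) + 1) * (K : ℝ) ^ (2 * C) * (∑ i ∈ Finset.range (2 * C + 1), f (n + i)) *
            (sphereCount (Red X) n : ℝ) := by
          rw [← Finset.sum_mul]; ring
  have hStend : Tendsto (fun n => ∑ i ∈ Finset.range (2 * C + 1), f (n + i)) atTop (𝓝 0) := by
    have h : ∀ i : ℕ, Tendsto (fun n => f (n + i)) atTop (𝓝 0) := fun i =>
      hftend.comp (tendsto_add_atTop_nat i)
    have := tendsto_finset_sum (Finset.range (2 * C + 1))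
      (fun i (_ : i ∈ Finset.range (2 * C + 1)) => h i)
    simpa using this
  have hBtend : Tendsto (fun n => ((C : ℝ) + 1) * (K : ℝ) ^ (2 * C) *
      ∑ i ∈ Finset.range (2 * C + 1), f (n + i)) atTop (𝓝 0) := by
    simpa using hStend.const_mul (((C : ℝ) + 1) * (K : ℝ) ^ (2 * C))
  have hgtend : Tendsto (relRatio N (Red X)) atTop (𝓝 0) :=
    squeeze_zero (fun n => div_nonneg (by positivity) (le_of_lt (hRpos n))) hkey hBtend
  exact hgtend.limsup_eq
end

section
/- Let L ⊆ Red(X) be a regular language of reduced words, |X| ≥ 2. Then D(L | Red(X)) = 0 if and only if there exists a reduced word w such that w occurs as a factor of no word of L. -/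
open Filter Topology

namespace S13

attribute [local instance] Classical.propDecidable

variable {X : Type*} [Fintype X]

/-- formal inverse of a letter -/
def inv {X : Type*} (a : X × Bool) : X × Bool := (a.1, !a.2)

/-- `OK o b` : letter `b` may follow previous-letter `o` in a reduced word. -/
def OK {X : Type*} (o : Option (X × Bool)) (b : X × Bool) : Prop :=
  ∀ c, o = some c → b ≠ inv c

/-- `RF o w` : `w` is reduced as a continuation after previous letter `o`. -/
def RF {X : Type*} : Option (X × Bool) → List (X × Bool) → Prop
  | _, [] => True
  | o, b :: t => OK o b ∧ RF (some b) t

@[simp] lemma OK_none {X : Type*} (b : X × Bool) : OK (none : Option (X × Bool)) b := by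
  intro c hc; cases hc

@[simp] lemma RF_nil {X : Type*} (o : Option (X × Bool)) : RF o ([] : List (X × Bool)) := trivial

@[simp] lemma RF_cons {X : Type*} (o : Option (X × Bool)) (b : X × Bool) (t : List (X × Bool)) :
    RF o (b :: t) ↔ OK o b ∧ RF (some b) t := Iff.rfl

lemma OK_some_iff {X : Type*} (c b : X × Bool) :
    OK (some c) b ↔ (c.1 = b.1 → c.2 = b.2) := by
  constructor
  · intro h h1
    by_contra h2
    exact h c rfl (by
      apply Prod.ext
      · exact h1.symm
      · simp only [inv]
        cases hc : c.2 <;> cases hb : b.2 <;> simp_all)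
  · rintro h c' hc hbc
    cases hc
    subst hbc
    simp only [inv] at h
    have := h trivial
    simp at this
    

lemma OK_some_ne {X : Type*} (c b : X × Bool) : OK (some c) b ↔ b ≠ inv c := by
  constructor
  · intro h; exact h c rfl
  · intro h c' hc; cases hc; exact h

lemma RF_some_iff_chain {X : Type*} (c : X × Bool) (t : List (X × Bool)) :
    RF (some c) t ↔ List.Chain (fun a b => a.1 = b.1 → a.2 = b.2) c t := by
  induction t generalizing c with
  | nil => simp [List.Chain]
  | cons b t ih => simp [List.chain_cons, ih, OK_some_iff, and_comm, List.Chain]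

lemma RF_none_iff {X : Type*} (w : List (X × Bool)) :
    RF (none : Option (X × Bool)) w ↔ FreelyReduced w := by
  cases w with
  | nil => simp [FreelyReduced, List.Chain']
  | cons b t => simp [FreelyReduced, RF_some_iff_chain, List.Chain', List.Chain]

lemma RF_of_RF {X : Type*} (o : Option (X × Bool)) (w : List (X × Bool)) (h : RF o w) :
    RF none w := by
  cases w with
  | nil => trivial
  | cons b t => exact ⟨OK_none b, h.2⟩

/-- the last letter after reading `y` following previous-letter `o`. -/
def last' {X : Type*} (o : Option (X × Bool)) (y : List (X × Bool)) : Option (X × Bool) :=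
  y.foldl (fun _ b => some b) o

@[simp] lemma last'_nil {X : Type*} (o : Option (X × Bool)) : last' o ([] : List (X × Bool)) = o := rfl

@[simp] lemma last'_cons {X : Type*} (o : Option (X × Bool)) (b : X × Bool) (t : List (X × Bool)) :
    last' o (b :: t) = last' (some b) t := rfl

lemma last'_append {X : Type*} (o : Option (X × Bool)) (y z : List (X × Bool)) :
    last' o (y ++ z) = last' (last' o y) z := List.foldl_append

lemma RF_append {X : Type*} (o : Option (X × Bool)) (y z : List (X × Bool)) :
    RF o (y ++ z) ↔ RF o y ∧ RF (last' o y) z := by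
  induction y generalizing o with
  | nil => simp
  | cons b t ih => simp [ih, and_assoc]

end S13

namespace S13X

open S13

attribute [local instance] Classical.propDecidable

variable {X : Type*} [Fintype X]

/-- the finset of reduced words of length `n` following previous-letter `o`. -/
noncomputable def red (o : Option (X × Bool)) : ℕ → Finset (List (X × Bool))
  | 0 => {[]}
  | n+1 => (Finset.univ.filter (fun b => OK o b)).biUnion
      (fun b => (red (some b) n).image (b :: ·))

lemma mem_red {o : Option (X × Bool)} {n : ℕ} {v : List (X × Bool)} :
    v ∈ red o n ↔ RF o v ∧ v.length = n := by
  induction n generalizing o v with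
  | zero =>
    simp only [red, Finset.mem_singleton, List.length_eq_zero_iff]
    constructor
    · rintro rfl; exact ⟨trivial, rfl⟩
    · rintro ⟨-, rfl⟩; rfl
  | succ n ih =>
    simp only [red, Finset.mem_biUnion, Finset.mem_filter, Finset.mem_univ, true_and,
      Finset.mem_image]
    constructor
    · rintro ⟨b, hb, t, ht, rfl⟩
      obtain ⟨h1, h2⟩ := ih.mp ht
      exact ⟨⟨hb, h1⟩, by simp [h2]⟩
    · rintro ⟨hrf, hlen⟩
      cases v with
      | nil => simp at hlen
      | cons b t =>
        exact ⟨b, hrf.1, t, ih.mpr ⟨hrf.2, by simpa using hlen⟩, rfl⟩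

lemma card_filter_OK (a : X × Bool) :
    (Finset.univ.filter (fun b => OK (some a) b)).card = Fintype.card X * 2 - 1 := by
  have h1 : (Finset.univ.filter (fun b => OK (some a) b)) = Finset.univ.erase (inv a) := by
    ext b
    simp [OK_some_ne, Finset.mem_erase]
  rw [h1, Finset.card_erase_of_mem (Finset.mem_univ _), Finset.card_univ]
  congr 1
  simp [Fintype.card_prod, mul_comm]

lemma card_red_some (a : X × Bool) (n : ℕ) :
    (red (some a) n).card = (Fintype.card X * 2 - 1) ^ n := by
  induction n generalizing a with
  | zero => simp [red]
  | succ n ih =>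
    rw [red, Finset.card_biUnion]
    · rw [Finset.sum_congr rfl (fun b _ => ?_), Finset.sum_const, card_filter_OK, smul_eq_mul,
        pow_succ']
      rw [Finset.card_image_of_injective _ (fun x y h => by injection h), ih]
    · intro b _ c _ hbc
      apply Finset.disjoint_left.mpr
      rintro v hv hv'
      simp only [Finset.mem_image] at hv hv'
      obtain ⟨t, -, rfl⟩ := hv
      obtain ⟨t', -, h⟩ := hv'
      exact hbc (by injection h.symm)

lemma card_red_none (n : ℕ) :
    (red (none : Option (X × Bool)) (n+1)).card
      = (Fintype.card X * 2) * (Fintype.card X * 2 - 1) ^ n := by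
  rw [red, Finset.card_biUnion]
  · rw [Finset.sum_congr rfl (fun b _ => ?_), Finset.sum_const, smul_eq_mul]
    · congr 1
      rw [Finset.filter_true_of_mem (fun b _ => OK_none b), Finset.card_univ]
      simp [Fintype.card_prod, mul_comm]
    rw [Finset.card_image_of_injective _ (fun x y h => by injection h), card_red_some]
  · intro b _ c _ hbc
    apply Finset.disjoint_left.mpr
    rintro v hv hv'
    simp only [Finset.mem_image] at hv hv'
    obtain ⟨t, -, rfl⟩ := hv
    obtain ⟨t', -, h⟩ := hv'
    exact hbc (by injection h.symm)

end S13X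

namespace S13Y
open S13 S13X

attribute [local instance] Classical.propDecidable

variable {X : Type*} [Fintype X]

lemma sphereCount_eq_ncard (L : Set (List (X × Bool))) (n : ℕ) :
    sphereCount L n = Set.ncard {w | w ∈ L ∧ w.length = n} := rfl

lemma sphereCount_le_card (L : Set (List (X × Bool))) (n : ℕ)
    (F : Finset (List (X × Bool))) (h : ∀ u, u ∈ L → u.length = n → u ∈ F) :
    sphereCount L n ≤ F.card := by
  rw [sphereCount_eq_ncard, ← Set.ncard_coe_finset]
  exact Set.ncard_le_ncard (fun u hu => h u hu.1 hu.2) F.finite_toSet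

lemma sphereCount_Red (n : ℕ) :
    sphereCount (Red X) n = (red (none : Option (X × Bool)) n).card := by
  rw [sphereCount_eq_ncard, ← Set.ncard_coe_finset]
  congr 1
  ext v
  simp only [Set.mem_setOf_eq, Finset.coe_sort_coe, Finset.mem_coe, mem_red, RF_none_iff]
  exact and_congr_left (fun _ => Iff.rfl)

end S13Y

namespace S13L
open S13 S13X S13Y

attribute [local instance] Classical.propDecidable

variable {X : Type*} [Fintype X]

/-- reduced words of length `n` after `o` avoiding the factor `w`. -/
noncomputable def AvF (w : List (X × Bool)) (o : Option (X × Bool)) (n : ℕ) :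
    Finset (List (X × Bool)) :=
  (red o n).filter (fun v => ¬ w <:+: v)

lemma mem_AvF {w : List (X × Bool)} {o : Option (X × Bool)} {n : ℕ} {v : List (X × Bool)} :
    v ∈ AvF w o n ↔ RF o v ∧ v.length = n ∧ ¬ w <:+: v := by
  simp [AvF, mem_red, and_assoc]

lemma last'_of_ne_nil {z : List (X × Bool)} (hz : z ≠ []) (o : Option (X × Bool)) :
    last' o z = z.getLast? := by
  induction z generalizing o with
  | nil => exact absurd rfl hz
  | cons b t ih =>
    cases t with
    | nil => simp [last']
    | cons c s => rw [last'_cons, ih (by simp), List.getLast?_cons_cons]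

@[simp] lemma inv_inv (a : X × Bool) : inv (inv a) = a := by simp [inv]

/-- the number of blocks avoiding `w` of length `|w| + 1` -/
lemma card_AvF_block (w₀ : X × Bool) (w₁ : List (X × Bool))
    (hw : FreelyReduced (w₀ :: w₁)) (a : X × Bool) :
    (AvF (w₀ :: w₁) (some a) ((w₀ :: w₁).length + 1)).card
      ≤ (Fintype.card X * 2 - 1) ^ ((w₀ :: w₁).length + 1) - (Fintype.card X * 2 - 2) := by
  classical
  set w : List (X × Bool) := w₀ :: w₁ with hwdef
  set B : ℕ := w.length + 1 with hB
  set G : Finset (X × Bool) := Finset.univ.filter (fun x => x ≠ inv a ∧ w₀ ≠ inv x) with hG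
  have hGsub : G.image (· :: w) ⊆ red (some a) B := by
    intro v hv
    simp only [Finset.mem_image, hG, Finset.mem_filter, Finset.mem_univ, true_and] at hv
    obtain ⟨x, ⟨hx1, hx2⟩, rfl⟩ := hv
    rw [mem_red]
    refine ⟨⟨(OK_some_ne a x).mpr hx1, (OK_some_ne x w₀).mpr hx2, ?_⟩, by simp [hB]⟩
    have := (RF_none_iff w).mpr hw
    exact this.2
  have hdisj : ∀ v ∈ G.image (· :: w), v ∉ AvF w (some a) B := by
    intro v hv hv'
    simp only [Finset.mem_image] at hv
    obtain ⟨x, -, rfl⟩ := hv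
    exact (mem_AvF.mp hv').2.2 ((List.suffix_cons x w).isInfix)
  have hsub : AvF w (some a) B ⊆ red (some a) B \ G.image (· :: w) := by
    intro v hv
    rw [Finset.mem_sdiff]
    exact ⟨Finset.filter_subset _ _ hv, fun h => hdisj v h hv⟩
  calc (AvF w (some a) B).card ≤ (red (some a) B \ G.image (· :: w)).card :=
        Finset.card_le_card hsub
    _ = (red (some a) B).card - (G.image (· :: w)).card :=
        Finset.card_sdiff_of_subset (fun v hv => hGsub hv)
    _ ≤ (Fintype.card X * 2 - 1) ^ B - (Fintype.card X * 2 - 2) := by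
        rw [card_red_some]
        apply Nat.sub_le_sub_left
        rw [Finset.card_image_of_injective _ (fun x y h => by injection h)]
        have : Finset.univ \ {inv a, inv w₀} ⊆ G := by
          intro x hx
          simp only [Finset.mem_sdiff, Finset.mem_insert, Finset.mem_singleton, not_or] at hx
          simp only [hG, Finset.mem_filter, Finset.mem_univ, true_and]
          refine ⟨hx.2.1, fun h => hx.2.2 ?_⟩
          rw [h, inv_inv]
        calc Fintype.card X * 2 - 2
            = Fintype.card (X × Bool) - 2 := by simp [Fintype.card_prod, mul_comm]
          _ ≤ Finset.univ.card - ({inv a, inv w₀} : Finset (X × Bool)).card := by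
              rw [Finset.card_univ]
              exact Nat.sub_le_sub_left (Finset.card_insert_le _ _ |>.trans (by simp)) _
          _ ≤ (Finset.univ \ {inv a, inv w₀}).card := Finset.le_card_sdiff _ _
          _ ≤ G.card := Finset.card_le_card this

end S13L

namespace S13L2
open S13 S13X S13Y S13L

attribute [local instance] Classical.propDecidable

variable {X : Type*} [Fintype X]

lemma card_AvF_le_pow (w : List (X × Bool)) (o : Option (X × Bool)) (n : ℕ) (a : X × Bool)
    (ho : o = some a) : (AvF w o n).card ≤ (Fintype.card X * 2 - 1) ^ n := by
  subst ho
  calc (AvF w (some a) n).card ≤ (red (some a) n).card :=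
        Finset.card_le_card (Finset.filter_subset _ _)
    _ = _ := card_red_some a n

lemma card_AvF_rec (w₀ : X × Bool) (w₁ : List (X × Bool)) (hw : FreelyReduced (w₀ :: w₁))
    (q s : ℕ) (a : X × Bool) :
    (AvF (w₀ :: w₁) (some a) (q * ((w₀ :: w₁).length + 1) + s)).card
      ≤ ((Fintype.card X * 2 - 1) ^ ((w₀ :: w₁).length + 1) - (Fintype.card X * 2 - 2)) ^ q
        * (Fintype.card X * 2 - 1) ^ s := by
  set w : List (X × Bool) := w₀ :: w₁ with hwdef
  set B : ℕ := w.length + 1 with hB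
  set E : ℕ := (Fintype.card X * 2 - 1) ^ B - (Fintype.card X * 2 - 2) with hE
  induction q generalizing a with
  | zero => simpa using card_AvF_le_pow w (some a) s a rfl
  | succ q ih =>
    have hsplit : (q + 1) * B + s = B + (q * B + s) := by ring
    rw [hsplit]
    have hsub : AvF w (some a) (B + (q * B + s)) ⊆
        (AvF w (some a) B).biUnion
          (fun z => (AvF w (last' (some a) z) (q * B + s)).image (z ++ ·)) := by
      intro v hv
      obtain ⟨h1, h2, h3⟩ := mem_AvF.mp hv
      rw [Finset.mem_biUnion]
      refine ⟨v.take B, ?_, ?_⟩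
      · rw [mem_AvF]
        have htp : v.take B ++ v.drop B = v := List.take_append_drop B v
        refine ⟨?_, ?_, ?_⟩
        · have := (RF_append (some a) (v.take B) (v.drop B))
          rw [htp] at this
          exact (this.mp h1).1
        · rw [List.length_take, h2]; omega
        · exact fun hinf => h3 (hinf.trans (List.take_prefix B v).isInfix)
      · rw [Finset.mem_image]
        refine ⟨v.drop B, ?_, List.take_append_drop B v⟩
        rw [mem_AvF]
        have htp : v.take B ++ v.drop B = v := List.take_append_drop B v
        refine ⟨?_, ?_, ?_⟩
        · have := (RF_append (some a) (v.take B) (v.drop B))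
          rw [htp] at this
          exact (this.mp h1).2
        · rw [List.length_drop, h2]; omega
        · exact fun hinf => h3 (hinf.trans (List.drop_suffix B v).isInfix)
    calc (AvF w (some a) (B + (q * B + s))).card
        ≤ ∑ z ∈ AvF w (some a) B,
            ((AvF w (last' (some a) z) (q * B + s)).image (z ++ ·)).card :=
          (Finset.card_le_card hsub).trans (Finset.card_biUnion_le)
      _ ≤ ∑ _z ∈ AvF w (some a) B, E ^ q * (Fintype.card X * 2 - 1) ^ s := by
          apply Finset.sum_le_sum
          intro z hz
          refine (Finset.card_image_le).trans ?_
          have hzne : z ≠ [] := by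
            intro h
            have := (mem_AvF.mp hz).2.1
            rw [h] at this
            simp [hB] at this
          obtain ⟨c, hc⟩ : ∃ c, z.getLast? = some c := by
            cases hzl : z.getLast? with
            | none => exact absurd (List.getLast?_eq_none_iff.mp hzl) hzne
            | some c => exact ⟨c, rfl⟩
          rw [last'_of_ne_nil hzne, hc]
          exact ih c
      _ ≤ E * (E ^ q * (Fintype.card X * 2 - 1) ^ s) := by
          rw [Finset.sum_const, smul_eq_mul]
          exact Nat.mul_le_mul_right _ (card_AvF_block w₀ w₁ hw a)
      _ = E ^ (q + 1) * (Fintype.card X * 2 - 1) ^ s := by ring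

end S13L2

namespace S13L3
open S13 S13X S13Y S13L S13L2

attribute [local instance] Classical.propDecidable

variable {X : Type*} [Fintype X]

lemma sphereCount_le_AvF (L : Set (List (X × Bool))) (hL : L ⊆ Red X)
    (w : List (X × Bool)) (hforb : ∀ u ∈ L, ¬ w <:+: u) (n : ℕ) :
    sphereCount L n ≤ (AvF w (none : Option (X × Bool)) n).card := by
  apply sphereCount_le_card
  intro u hu hlen
  rw [mem_AvF]
  exact ⟨(RF_none_iff u).mpr (hL hu), hlen, hforb u hu⟩

/-- split off first letter: bound none-card by sup over some-cards -/
lemma card_AvF_none_le (w : List (X × Bool)) (t : ℕ) (C : ℕ)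
    (h : ∀ a : X × Bool, (AvF w (some a) t).card ≤ C) :
    (AvF w (none : Option (X × Bool)) (t + 1)).card ≤ Fintype.card X * 2 * C := by
  have hsub : AvF w (none : Option (X × Bool)) (t+1) ⊆
      Finset.univ.biUnion (fun b : X × Bool => (AvF w (some b) t).image (b :: ·)) := by
    intro v hv
    obtain ⟨h1, h2, h3⟩ := mem_AvF.mp hv
    cases v with
    | nil => simp at h2
    | cons b u =>
      rw [Finset.mem_biUnion]
      refine ⟨b, Finset.mem_univ _, ?_⟩
      rw [Finset.mem_image]
      refine ⟨u, mem_AvF.mpr ⟨h1.2, by simpa using h2, ?_⟩, rfl⟩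
      exact fun hinf => h3 (hinf.trans (List.suffix_cons b u).isInfix)
  calc (AvF w (none : Option (X × Bool)) (t+1)).card
      ≤ ∑ b : X × Bool, ((AvF w (some b) t).image (b :: ·)).card :=
        (Finset.card_le_card hsub).trans Finset.card_biUnion_le
    _ ≤ ∑ _b : X × Bool, C := by
        apply Finset.sum_le_sum
        intro b _
        exact Finset.card_image_le.trans (h b)
    _ = Fintype.card X * 2 * C := by
        rw [Finset.sum_const, smul_eq_mul, Finset.card_univ, Fintype.card_prod,
          Fintype.card_bool]

theorem dir_forbidden_tendsto (hX : 2 ≤ Fintype.card X) (L : Set (List (X × Bool)))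
    (hL : L ⊆ Red X) (w : List (X × Bool)) (hw : FreelyReduced w)
    (hforb : ∀ u ∈ L, ¬ w <:+: u) :
    Filter.Tendsto (relRatio L (Red X)) Filter.atTop (nhds 0) := by
  cases w with
  | nil =>
    have hLempty : ∀ n, sphereCount L n = 0 := by
      intro n
      rw [sphereCount_eq_ncard]
      have : {u | u ∈ L ∧ u.length = n} = ∅ := by
        ext u
        simp only [Set.mem_setOf_eq, Set.mem_empty_iff_false, iff_false, not_and]
        exact fun hu _ => hforb u hu List.nil_infix
      rw [this, Set.ncard_empty]
    have : relRatio L (Red X) = fun _ => 0 := by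
      funext n
      simp [relRatio, hLempty n]
    rw [this]
    exact tendsto_const_nhds
  | cons w₀ w₁ =>
    set w : List (X × Bool) := w₀ :: w₁ with hwdef
    set m2 : ℕ := Fintype.card X * 2 with hm2
    set k : ℕ := m2 - 1 with hk
    set B : ℕ := w.length + 1 with hB
    set E : ℕ := k ^ B - (m2 - 2) with hE
    have hm2_4 : 4 ≤ m2 := by omega
    have hk3 : 3 ≤ k := by omega
    have hkpos : (0:ℝ) < (k:ℝ) := by positivity
    have hEltkB : E < k ^ B := by
      have h1 : 0 < k ^ B := Nat.pow_pos (by omega)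
      have h2 : 2 ≤ m2 - 2 := by omega
      have h3 : m2 - 2 ≤ k ^ B := by
        calc m2 - 2 ≤ k := by omega
          _ ≤ k ^ B := Nat.le_self_pow (by omega) k
      omega
    set ρ : ℝ := (E : ℝ) / (k : ℝ) ^ B with hρ
    have hρ0 : 0 ≤ ρ := by positivity
    have hρ1 : ρ < 1 := by
      rw [hρ, div_lt_one (by positivity)]
      exact_mod_cast (by exact_mod_cast hEltkB : (E:ℝ) < (k:ℝ)^B)
    -- main bound : for n = t+1, relRatio n ≤ ρ ^ (t / B)
    have hbound : ∀ t : ℕ, relRatio L (Red X) (t+1) ≤ ρ ^ (t / B) := by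
      intro t
      set q : ℕ := t / B with hqd
      set s : ℕ := t % B with hsd
      have hq : q * B + s = t := by rw [hqd, hsd, mul_comm]; exact Nat.div_add_mod t B
      have hnum : sphereCount L (t+1) ≤ m2 * (E ^ q * k ^ s) := by
        refine (sphereCount_le_AvF L hL w hforb (t+1)).trans ?_
        apply card_AvF_none_le
        intro a
        calc (AvF w (some a) t).card = (AvF w (some a) (q * B + s)).card := by rw [hq]
          _ ≤ E ^ q * k ^ s := card_AvF_rec w₀ w₁ hw q s a
      have hden : sphereCount (Red X) (t+1) = m2 * k ^ t := by
        rw [sphereCount_Red, card_red_none]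
      have hdenpos : (0:ℝ) < (sphereCount (Red X) (t+1) : ℝ) := by
        rw [hden]
        positivity
      rw [relRatio, div_le_iff₀ hdenpos]
      have hkt : (k:ℝ) ^ t = ((k:ℝ) ^ B) ^ q * (k:ℝ) ^ s := by
        rw [← pow_mul, ← pow_add, mul_comm B q, hq]
      calc (sphereCount L (t+1) : ℝ) ≤ (m2 : ℝ) * ((E:ℝ) ^ q * (k:ℝ) ^ s) := by
            exact_mod_cast hnum
        _ = ρ ^ q * ((m2:ℝ) * k ^ t) := by
            rw [hρ, div_pow, hkt]
            field_simp
        _ = ρ ^ q * (sphereCount (Red X) (t+1) : ℝ) := by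
            rw [hden]
            push_cast
            ring
    -- squeeze
    have hnn : ∀ n, 0 ≤ relRatio L (Red X) n := by
      intro n
      unfold relRatio
      positivity
    have haux : Filter.Tendsto (fun n : ℕ => ρ ^ ((n - 1) / B)) Filter.atTop (nhds 0) := by
      apply (tendsto_pow_atTop_nhds_zero_of_lt_one hρ0 hρ1).comp
      apply Filter.tendsto_atTop_atTop.mpr
      intro b
      refine ⟨b * B + 1, fun n hn => ?_⟩
      have hBpos : 0 < B := by omega
      rw [Nat.le_div_iff_mul_le hBpos]
      omega
    apply squeeze_zero hnn _ haux
    intro n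
    cases n with
    | zero =>
      have : relRatio L (Red X) 0 ≤ 1 := by
        unfold relRatio
        apply div_le_one_of_le₀
        · have h1 : sphereCount L 0 ≤ (red (none : Option (X × Bool)) 0).card :=
            sphereCount_le_card L 0 (red none 0) (fun u hu hlen => by
              rw [mem_red]
              exact ⟨(RF_none_iff u).mpr (hL hu), hlen⟩)
          have h2 : sphereCount (Red X) 0 = (red (none : Option (X × Bool)) 0).card :=
            sphereCount_Red 0
          rw [h2]
          exact_mod_cast h1
        · positivity
      simpa using this.trans (by simp)
    | succ t =>
      simpa using hbound t

end S13L3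

namespace S13R
open S13 S13X S13Y

attribute [local instance] Classical.propDecidable

variable {X : Type*} [Fintype X] {σ : Type} [Fintype σ] (M : DFA (X × Bool) σ)

/-- run of the automaton together with the last letter read. -/
def evalP (p : σ × Option (X × Bool)) (y : List (X × Bool)) : σ × Option (X × Bool) :=
  (M.evalFrom p.1 y, last' p.2 y)

lemma evalFrom_append (s : σ) (x y : List (X × Bool)) :
    M.evalFrom s (x ++ y) = M.evalFrom (M.evalFrom s x) y := by
  simp [DFA.evalFrom, List.foldl_append]

lemma evalP_append (p : σ × Option (X × Bool)) (y z : List (X × Bool)) :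
    evalP M p (y ++ z) = evalP M (evalP M p y) z := by
  simp [evalP, evalFrom_append, last'_append]

@[simp] lemma evalP_snd (p : σ × Option (X × Bool)) (y : List (X × Bool)) :
    (evalP M p y).2 = last' p.2 y := rfl

/-- from `p` (with memory of last letter) some accepting state is reachable
by a reduced continuation. -/
def Alive (p : σ × Option (X × Bool)) : Prop :=
  ∃ y, RF p.2 y ∧ M.evalFrom p.1 y ∈ M.accept

/-- `p` is reachable from the start by a reduced word. -/
def Reach (p : σ × Option (X × Bool)) : Prop :=
  ∃ x, RF none x ∧ evalP M (M.start, none) x = p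

lemma alive_of_alive_evalP {p : σ × Option (X × Bool)} {y : List (X × Bool)}
    (hy : RF p.2 y) (h : Alive M (evalP M p y)) : Alive M p := by
  obtain ⟨z, hz1, hz2⟩ := h
  refine ⟨y ++ z, ?_, ?_⟩
  · exact (RF_append p.2 y z).mpr ⟨hy, hz1⟩
  · rw [evalFrom_append]
    exact hz2

lemma RF_of_prefix {o : Option (X × Bool)} {v V : List (X × Bool)}
    (h : v <+: V) (hV : RF o V) : RF o v := by
  obtain ⟨r, rfl⟩ := h
  exact ((RF_append o v r).mp hV).1

lemma shorten {p : σ × Option (X × Bool)} {y : List (X × Bool)}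
    (hy1 : RF p.2 y) (hy2 : M.evalFrom p.1 y ∈ M.accept)
    (i j : ℕ) (hij : i < j) (hj : j ≤ y.length)
    (heq : evalP M p (y.take i) = evalP M p (y.take j)) :
    ∃ y', RF p.2 y' ∧ M.evalFrom p.1 y' ∈ M.accept ∧ y'.length < y.length := by
  refine ⟨y.take i ++ y.drop j, ?_, ?_, ?_⟩
  · rw [RF_append]
    constructor
    · exact RF_of_prefix (List.take_prefix i y) hy1
    · have h1 : last' p.2 (y.take i) = last' p.2 (y.take j) := by
        have := congrArg Prod.snd heq
        simpa [evalP] using this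
      rw [h1]
      have h2 : y.take j ++ y.drop j = y := List.take_append_drop j y
      have := (RF_append p.2 (y.take j) (y.drop j)).mp (by rw [h2]; exact hy1)
      exact this.2
  · rw [evalFrom_append]
    have h1 : M.evalFrom p.1 (y.take i) = M.evalFrom p.1 (y.take j) := by
      have := congrArg Prod.fst heq
      simpa [evalP] using this
    rw [h1, ← evalFrom_append, List.take_append_drop]
    exact hy2
  · rw [List.length_append, List.length_take, List.length_drop]
    omega

/-- a live pair has a short witness. -/
lemma alive_short {p : σ × Option (X × Bool)} (h : Alive M p) :
    ∃ y, RF p.2 y ∧ M.evalFrom p.1 y ∈ M.accept ∧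
      y.length ≤ Fintype.card (σ × Option (X × Bool)) := by
  classical
  obtain ⟨y, hy1, hy2⟩ := h
  have H : ∀ n (y : List (X × Bool)), y.length = n → RF p.2 y →
      M.evalFrom p.1 y ∈ M.accept →
      ∃ y', RF p.2 y' ∧ M.evalFrom p.1 y' ∈ M.accept ∧
        y'.length ≤ Fintype.card (σ × Option (X × Bool)) := by
    intro n
    induction n using Nat.strong_induction_on with
    | _ n ih =>
      intro y hlen hy1 hy2
      by_cases hle : y.length ≤ Fintype.card (σ × Option (X × Bool))
      · exact ⟨y, hy1, hy2, hle⟩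
      · push_neg at hle
        have hcard : Fintype.card (σ × Option (X × Bool))
            < Fintype.card (Fin (y.length + 1)) := by
          rw [Fintype.card_fin]
          omega
        obtain ⟨i, j, hij, hfij⟩ := Fintype.exists_ne_map_eq_of_card_lt
          (fun i : Fin (y.length + 1) => evalP M p (y.take i)) hcard
        have key : ∃ y', RF p.2 y' ∧ M.evalFrom p.1 y' ∈ M.accept ∧
            y'.length < y.length := by
          rcases lt_or_gt_of_ne hij with hlt | hgt
          · exact shorten M hy1 hy2 i j hlt (by omega) hfij
          · exact shorten M hy1 hy2 j i hgt (by omega) hfij.symm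
        obtain ⟨y', h1, h2, h3⟩ := key
        exact ih y'.length (by omega) y' rfl h1 h2
  exact H y.length y rfl hy1 hy2

end S13R

namespace S13B
open S13 S13X S13Y S13R

attribute [local instance] Classical.propDecidable

variable {X : Type*} [Fintype X] {σ : Type} [Fintype σ] (M : DFA (X × Bool) σ)

lemma last'_none_eq {o : Option (X × Bool)} {v : List (X × Bool)} (hv : v ≠ []) :
    last' (none : Option (X × Bool)) v = last' o v := by
  rw [S13L.last'_of_ne_nil hv, S13L.last'_of_ne_nil hv]

lemma reach_evalP {p : σ × Option (X × Bool)} (hp : Reach M p) {v : List (X × Bool)}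
    (hv : RF p.2 v) : Reach M (evalP M p v) := by
  obtain ⟨x, hx1, hx2⟩ := hp
  refine ⟨x ++ v, ?_, ?_⟩
  · rw [RF_append]
    refine ⟨hx1, ?_⟩
    have : last' (none : Option (X × Bool)) x = p.2 := by
      rw [← hx2]
      rfl
    rw [this]
    exact hv
  · rw [evalP_append, hx2]

lemma buildV (hkill : ∀ p, Reach M p → ∃ y, RF p.2 y ∧ ¬ Alive M (evalP M p y)) :
    ∀ (ps : List (σ × Option (X × Bool))) (v : List (X × Bool)), RF none v →
      (∀ p ∈ ps, Reach M p) →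
      ∃ V, v <+: V ∧ RF none V ∧
        ∀ p ∈ ps, RF p.2 V → ¬ Alive M (evalP M p V) := by
  intro ps
  induction ps with
  | nil =>
    intro v hv _
    exact ⟨v, List.prefix_refl v, hv, fun p hp => absurd hp List.not_mem_nil⟩
  | cons p ps ih =>
    intro v hv hreach
    by_cases hrf : RF p.2 v
    · -- extend v by a killing word for `evalP M p v`
      have hp : Reach M p := hreach p List.mem_cons_self
      have hp' : Reach M (evalP M p v) := reach_evalP M hp hrf
      obtain ⟨y, hy1, hy2⟩ := hkill _ hp'
      have hv' : RF (none : Option (X × Bool)) (v ++ y) := by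
        rw [RF_append]
        refine ⟨hv, ?_⟩
        rcases eq_or_ne v [] with rfl | hne
        · exact RF_of_RF _ _ hy1
        · rw [last'_none_eq hne]
          exact hy1
      obtain ⟨V, hpre, hVrf, hV⟩ := ih (v ++ y) hv'
        (fun q hq => hreach q (List.mem_cons_of_mem p hq))
      refine ⟨V, (List.prefix_append v y).trans hpre, hVrf, ?_⟩
      intro q hq hqV
      rcases List.mem_cons.mp hq with rfl | hq'
      · -- q = p : dead after v ++ y, stays dead
        obtain ⟨r, rfl⟩ := hpre
        intro halive
        rw [evalP_append] at halive
        have hrf2 : RF ((evalP M q (v ++ y)).2) r := by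
          have := (RF_append q.2 (v ++ y) r).mp hqV
          exact this.2
        have := alive_of_alive_evalP M hrf2 halive
        rw [evalP_append] at this
        exact hy2 this
      · exact hV q hq' hqV
    · -- p can never read V since v is a prefix of V
      obtain ⟨V, hpre, hVrf, hV⟩ := ih v hv
        (fun q hq => hreach q (List.mem_cons_of_mem p hq))
      refine ⟨V, hpre, hVrf, ?_⟩
      intro q hq hqV
      rcases List.mem_cons.mp hq with rfl | hq'
      · exact absurd (RF_of_prefix hpre hqV) hrf
      · exact hV q hq' hqV

/-- Case B: if every reachable pair can be killed, there is a reduced word that is a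
factor of no accepted reduced word. -/
lemma caseB (hkill : ∀ p, Reach M p → ∃ y, RF p.2 y ∧ ¬ Alive M (evalP M p y)) :
    ∃ V : List (X × Bool), FreelyReduced V ∧
      ∀ u, M.evalFrom M.start u ∈ M.accept → FreelyReduced u → ¬ V <:+: u := by
  classical
  set ps : List (σ × Option (X × Bool)) := (Finset.univ.filter (Reach M)).toList with hps
  have hreach : ∀ p ∈ ps, Reach M p := by
    intro p hp
    rw [hps, Finset.mem_toList, Finset.mem_filter] at hp
    exact hp.2
  obtain ⟨V, -, hVrf, hV⟩ := buildV M hkill ps [] trivial hreach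
  refine ⟨V, (RF_none_iff V).mp hVrf, ?_⟩
  rintro u hacc hured ⟨x, z, rfl⟩
  -- u = x ++ V ++ z  (IsInfix: ∃ s t, s ++ V ++ t = u, order check!)
  have huRF : RF (none : Option (X × Bool)) (x ++ V ++ z) := (RF_none_iff _).mpr hured
  set p : σ × Option (X × Bool) := evalP M (M.start, none) x with hpdef
  have hpreach : Reach M p := ⟨x, (RF_append _ _ _).mp (by rw [List.append_assoc] at huRF; exact huRF) |>.1, rfl⟩
  have hpmem : p ∈ ps := by
    rw [hps, Finset.mem_toList, Finset.mem_filter]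
    exact ⟨Finset.mem_univ _, hpreach⟩
  have hx2 : p.2 = last' (none : Option (X × Bool)) x := rfl
  have hRFrest : RF p.2 (V ++ z) := by
    rw [hx2]
    have := (RF_append (none : Option (X × Bool)) x (V ++ z)).mp
      (by rw [List.append_assoc] at huRF; exact huRF)
    exact this.2
  have hRFV : RF p.2 V := RF_of_prefix (List.prefix_append V z) hRFrest
  apply hV p hpmem hRFV
  refine ⟨z, ?_, ?_⟩
  · have := (RF_append p.2 V z).mp hRFrest
    exact this.2
  · have : M.evalFrom (evalP M p V).1 z = M.evalFrom M.start (x ++ V ++ z) := by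
      rw [evalFrom_append, evalFrom_append]
      rfl
    rw [this]
    exact hacc

end S13B

namespace S13A
open S13 S13X S13Y S13R

attribute [local instance] Classical.propDecidable

variable {X : Type*} [Fintype X] {σ : Type} [Fintype σ] (M : DFA (X × Bool) σ)

lemma pow_le_card_red (hX : 2 ≤ Fintype.card X) (o : Option (X × Bool)) (n : ℕ) :
    (Fintype.card X * 2 - 1) ^ n ≤ (red o n).card := by
  cases o with
  | some a => rw [card_red_some]
  | none =>
    cases n with
    | zero => simp [red]
    | succ n =>
      rw [card_red_none, pow_succ']
      exact Nat.mul_le_mul_right _ (by omega)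

lemma finite_sphere (L : Set (List (X × Bool))) (m : ℕ) :
    {u : List (X × Bool) | u ∈ L ∧ u.length = m}.Finite :=
  Set.Finite.subset (List.finite_length_eq _ m) (fun u hu => hu.2)

lemma sphereCount_eq_toFinset (L : Set (List (X × Bool))) (m : ℕ) :
    sphereCount L m = (finite_sphere L m).toFinset.card := by
  rw [sphereCount_eq_ncard, Set.ncard_eq_toFinset_card _ (finite_sphere L m)]

lemma caseA_count (hX : 2 ≤ Fintype.card X) (L : Set (List (X × Bool)))
    (hacc : M.accepts = L) (p : σ × Option (X × Bool))
    (x₀ : List (X × Bool)) (hx₀1 : RF none x₀) (hx₀2 : evalP M (M.start, none) x₀ = p)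
    (hrob : ∀ y, RF p.2 y → Alive M (evalP M p y)) (n : ℕ) :
    (Fintype.card X * 2 - 1) ^ n ≤
      ∑ j ∈ Finset.range (Fintype.card (σ × Option (X × Bool)) + 1),
        sphereCount L (x₀.length + n + j) := by
  classical
  set K := Fintype.card (σ × Option (X × Bool)) with hK
  set c₀ := x₀.length with hc₀
  -- the completion function
  have shortw : ∀ v, RF p.2 v → ∃ y, RF (evalP M p v).2 y ∧
      M.evalFrom (evalP M p v).1 y ∈ M.accept ∧ y.length ≤ K :=
    fun v hv => alive_short M (hrob v hv)
  set f : List (X × Bool) → List (X × Bool) :=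
    fun v => if h : RF p.2 v then x₀ ++ (v ++ Classical.choose (shortw v h)) else [] with hf
  set S : Finset (List (X × Bool)) := red p.2 n with hS
  set F : Finset (List (X × Bool)) :=
    (Finset.range (K+1)).biUnion (fun j => (finite_sphere L (c₀ + n + j)).toFinset) with hF
  have hinj : Set.InjOn f ↑S := by
    intro v1 hv1 v2 hv2 heq
    rw [Finset.mem_coe, hS, mem_red] at hv1 hv2
    rw [hf] at heq
    simp only [dif_pos hv1.1, dif_pos hv2.1] at heq
    have h2 := List.append_cancel_left heq
    have h3 := congrArg (List.take n) h2
    rwa [List.take_left' hv1.2, List.take_left' hv2.2] at h3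
  have hmapsto : f '' ↑S ⊆ ↑F := by
    rintro u ⟨v, hv, rfl⟩
    rw [Finset.mem_coe, hS, mem_red] at hv
    rw [hf]
    simp only [dif_pos hv.1]
    set y := Classical.choose (shortw v hv.1) with hy
    obtain ⟨hy1, hy2, hy3⟩ := Classical.choose_spec (shortw v hv.1)
    rw [← hy] at hy1 hy2 hy3
    rw [Finset.mem_coe, hF, Finset.mem_biUnion]
    refine ⟨y.length, by rw [Finset.mem_range]; omega, ?_⟩
    rw [Set.Finite.mem_toFinset]
    constructor
    · -- accepted
      rw [← hacc]
      show M.evalFrom M.start _ ∈ M.accept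
      have e1 : M.evalFrom M.start (x₀ ++ (v ++ y)) =
          M.evalFrom (M.evalFrom (M.evalFrom M.start x₀) v) y := by
        rw [evalFrom_append, evalFrom_append]
      rw [e1]
      have e2 : M.evalFrom M.start x₀ = p.1 := by
        rw [← hx₀2]; rfl
      rw [e2]
      exact hy2
    · simp [hv.2, hc₀]
      omega
  calc (Fintype.card X * 2 - 1) ^ n ≤ S.card := pow_le_card_red hX p.2 n
    _ = (↑S : Set (List (X × Bool))).ncard := (Set.ncard_coe_finset S).symm
    _ = (f '' ↑S).ncard := (Set.ncard_image_of_injOn hinj).symm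
    _ ≤ (↑F : Set (List (X × Bool))).ncard :=
        Set.ncard_le_ncard hmapsto F.finite_toSet
    _ = F.card := Set.ncard_coe_finset F
    _ ≤ ∑ j ∈ Finset.range (K+1), ((finite_sphere L (c₀ + n + j)).toFinset).card :=
        Finset.card_biUnion_le
    _ = ∑ j ∈ Finset.range (K+1), sphereCount L (c₀ + n + j) := by
        refine Finset.sum_congr rfl (fun j _ => ?_)
        rw [sphereCount_eq_toFinset]

end S13A

namespace S13A2
open S13 S13X S13Y S13R S13A Filter

attribute [local instance] Classical.propDecidable

variable {X : Type*} [Fintype X] {σ : Type} [Fintype σ] (M : DFA (X × Bool) σ)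

lemma caseA (hX : 2 ≤ Fintype.card X) (L : Set (List (X × Bool)))
    (hacc : M.accepts = L) (p : σ × Option (X × Bool)) (hre : Reach M p)
    (hrob : ∀ y, RF p.2 y → Alive M (evalP M p y))
    (htend : Filter.Tendsto (relRatio L (Red X)) Filter.atTop (nhds 0)) : False := by
  classical
  obtain ⟨x₀, hx₀1, hx₀2⟩ := hre
  set K := Fintype.card (σ × Option (X × Bool)) with hK
  set c₀ := x₀.length with hc₀
  set m2 := Fintype.card X * 2 with hm2
  set k := m2 - 1 with hk
  have hm2_4 : 4 ≤ m2 := by omega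
  have hk3 : 3 ≤ k := by omega
  have hkR : (3:ℝ) ≤ (k:ℝ) := by exact_mod_cast hk3
  set D : ℝ := ((K:ℝ) + 1) * (m2:ℝ) * (k:ℝ) ^ (c₀ + K) with hD
  have hDpos : 0 < D := by
    rw [hD]
    positivity
  set ε : ℝ := 1 / (2 * D) with hε
  have hεpos : 0 < ε := by
    rw [hε]
    positivity
  have hev := (htend.eventually_lt_const hεpos).exists_forall_of_atTop
  obtain ⟨n₀, hn₀⟩ := hev
  set n := n₀ + 1 with hn
  have hcount := caseA_count M hX L hacc p x₀ hx₀1 hx₀2 hrob n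
  rw [← hK, ← hc₀] at hcount
  -- real versions
  have hsum : ((k:ℝ)) ^ n ≤ ∑ j ∈ Finset.range (K + 1),
      (sphereCount L (c₀ + n + j) : ℝ) := by
    have := hcount
    have hcast : ((∑ j ∈ Finset.range (K + 1), sphereCount L (c₀ + n + j) : ℕ) : ℝ)
        = ∑ j ∈ Finset.range (K + 1), (sphereCount L (c₀ + n + j) : ℝ) := by
      push_cast
      ring
    rw [← hcast]
    exact_mod_cast this
  have hterm : ∀ j ∈ Finset.range (K + 1),
      (sphereCount L (c₀ + n + j) : ℝ) < ε * ((m2:ℝ) * (k:ℝ) ^ (c₀ + n₀ + K)) := by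
    intro j hj
    rw [Finset.mem_range] at hj
    set ℓ := c₀ + n + j with hℓ
    have hℓn₀ : n₀ ≤ ℓ := by omega
    have hratio := hn₀ ℓ hℓn₀
    have hNval : sphereCount (Red X) ℓ = m2 * k ^ (c₀ + n₀ + j) := by
      have h1 : ℓ = (c₀ + n₀ + j) + 1 := by omega
      rw [h1, sphereCount_Red, card_red_none]
    have hNpos : (0:ℝ) < (sphereCount (Red X) ℓ : ℝ) := by
      rw [hNval]
      push_cast
      positivity
    have hs : (sphereCount L ℓ : ℝ) < ε * (sphereCount (Red X) ℓ : ℝ) := by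
      have := hratio
      rw [relRatio, div_lt_iff₀ hNpos] at this
      exact this
    refine hs.trans_le ?_
    apply mul_le_mul_of_nonneg_left _ hεpos.le
    rw [hNval]
    push_cast
    apply mul_le_mul_of_nonneg_left _ (by positivity)
    apply pow_le_pow_right₀ (by linarith)
    omega
  have hlt : ∑ j ∈ Finset.range (K + 1), (sphereCount L (c₀ + n + j) : ℝ)
      < (K + 1) * (ε * ((m2:ℝ) * (k:ℝ) ^ (c₀ + n₀ + K))) := by
    calc ∑ j ∈ Finset.range (K + 1), (sphereCount L (c₀ + n + j) : ℝ)
        < ∑ _j ∈ Finset.range (K + 1), ε * ((m2:ℝ) * (k:ℝ) ^ (c₀ + n₀ + K)) :=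
          Finset.sum_lt_sum_of_nonempty (by simp) hterm
      _ = (K + 1) * (ε * ((m2:ℝ) * (k:ℝ) ^ (c₀ + n₀ + K))) := by
          rw [Finset.sum_const, Finset.card_range, nsmul_eq_mul]
          push_cast
          ring
  have hval : ((K:ℝ) + 1) * (ε * ((m2:ℝ) * (k:ℝ) ^ (c₀ + n₀ + K)))
      = (k:ℝ) ^ n₀ / 2 := by
    have hsplit : (k:ℝ) ^ (c₀ + n₀ + K) = (k:ℝ) ^ (c₀ + K) * (k:ℝ) ^ n₀ := by
      rw [← pow_add]
      ring_nf
    rw [hε, hsplit, hD]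
    field_simp
  have hfinal : ((k:ℝ)) ^ n < (k:ℝ) ^ n₀ / 2 := by
    calc ((k:ℝ)) ^ n ≤ _ := hsum
      _ < (K + 1) * (ε * ((m2:ℝ) * (k:ℝ) ^ (c₀ + n₀ + K))) := hlt
      _ = (k:ℝ) ^ n₀ / 2 := hval
  have : (k:ℝ) ^ n₀ / 2 < (k:ℝ) ^ n := by
    rw [hn, pow_succ]
    have hp : (0:ℝ) < (k:ℝ) ^ n₀ := by positivity
    nlinarith
  linarith

end S13A2

/-- Sin'ya-type theorem for reduced words: for regular `L ⊆ Red(X)`,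
`D(L | Red(X)) = 0` iff some reduced word occurs as a factor of no word of `L`. -/
theorem stmt13 {X : Type*} [Fintype X] (hX : 2 ≤ Fintype.card X)
    (L : Set (List (X × Bool))) (hL : L ⊆ Red X) (hreg : RegularLang L) :
    Filter.Tendsto (relRatio L (Red X)) Filter.atTop (nhds 0) ↔
      ∃ w : List (X × Bool), FreelyReduced w ∧ ∀ u ∈ L, ¬ w <:+: u := by
  constructor
  · intro htend
    by_contra hcon
    push_neg at hcon
    obtain ⟨σ, hfin, M, hacc⟩ := hreg
    haveI := hfin
    by_cases hA : ∃ p, S13R.Reach M p ∧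
        ∀ y, S13.RF p.2 y → S13R.Alive M (S13R.evalP M p y)
    · obtain ⟨p, h1, h2⟩ := hA
      exact S13A2.caseA M hX L hacc p h1 h2 htend
    · push_neg at hA
      obtain ⟨V, hV1, hV2⟩ := S13B.caseB M hA
      obtain ⟨u, hu, hinf⟩ := hcon V hV1
      have huacc : u ∈ M.accepts := by rw [hacc]; exact hu
      exact hV2 u huacc (hL hu) hinf
  · rintro ⟨w, hw, hforb⟩
    exact S13L3.dir_forbidden_tendsto hX L hL w hw hforb
end

section
/- Let S be a rational subset of a nonabelian free group F with positive natural density δ(S) > 0. Then there exist k ∈ ℕ and elements a₁,...,a_k, b₁,...,b_k ∈ F such that F = ⋃_{i,j∈[k]} a_i S b_j. -/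
open Filter Topology

/-- The ratio `|S ∩ B(n)| / |B(n)|` for balls of the word metric in the free group. -/
noncomputable def ballRatio {X : Type*} [DecidableEq X] (S : Set (FreeGroup X)) (n : ℕ) : ℝ :=
  (Nat.card {g : FreeGroup X // g ∈ S ∧ (FreeGroup.toWord g).length ≤ n} : ℝ) /
    (Nat.card {g : FreeGroup X // (FreeGroup.toWord g).length ≤ n} : ℝ)

open List in
section
set_option linter.unusedSectionVars false
set_option maxHeartbeats 1000000


/-- letter `b` may follow letter `a` in a reduced word -/
def nok {α : Type*} (a b : α × Bool) : Prop := b ≠ (a.1, !a.2)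

instance {α : Type*} [DecidableEq α] (a : α × Bool) : DecidablePred (nok a) := fun b => by
  unfold nok; infer_instance

/-- reduced word -/
def RedW {α : Type*} (l : List (α × Bool)) : Prop := l.Chain' nok

lemma redW_nil {α : Type*} : RedW ([] : List (α × Bool)) := List.isChain_nil

lemma redW_reduce {α : Type*} [DecidableEq α] (L : List (α × Bool)) :
    RedW (FreeGroup.reduce L) := by
  induction L with
  | nil => exact List.isChain_nil
  | cons hd tl ih =>
    rw [FreeGroup.reduce.cons]
    rcases h : FreeGroup.reduce tl with _ | ⟨hd2, tl2⟩
    · exact List.isChain_singleton hd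
    · rw [h] at ih
      by_cases hc : hd.1 = hd2.1 ∧ hd.2 = !hd2.2
      · have ht : RedW tl2 := ih.tail; simpa [hc] using ht
      · simp only [if_neg hc]
        refine List.isChain_cons_cons.2 ⟨?_, ih⟩
        intro he
        apply hc
        rw [he]
        exact ⟨rfl, by simp⟩

lemma reduce_eq_self {α : Type*} [DecidableEq α] {L : List (α × Bool)} (h : RedW L) :
    FreeGroup.reduce L = L := by
  induction L with
  | nil => rfl
  | cons hd tl ih =>
    rw [FreeGroup.reduce.cons, ih h.tail]
    rcases tl with _ | ⟨hd2, tl2⟩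
    · rfl
    · have hn : hd2 ≠ (hd.1, !hd.2) := (List.isChain_cons_cons.1 h).1
      have hc : ¬ (hd.1 = hd2.1 ∧ hd.2 = !hd2.2) := by
        rintro ⟨h1, h2⟩
        exact hn (by ext <;> simp [h1, h2])
      simp only [if_neg hc]

lemma redW_toWord {α : Type*} [DecidableEq α] (g : FreeGroup α) : RedW g.toWord := by
  rw [← FreeGroup.reduce_toWord]; exact redW_reduce _

lemma toWord_mk_redW {α : Type*} [DecidableEq α] {L : List (α × Bool)} (h : RedW L) :
    (FreeGroup.mk L).toWord = L := by
  rw [FreeGroup.toWord_mk, reduce_eq_self h]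

set_option linter.unusedSectionVars false

section Auto
variable {α : Type*} [DecidableEq α] {σ : Type*} (M : DFA (α × Bool) σ)

/-- powerset step along one letter, allowing arbitrary words representing that letter -/
def dstep (T : Set σ) (a : α × Bool) : Set σ :=
  {q | ∃ p ∈ T, ∃ w, FreeGroup.mk w = FreeGroup.mk [a] ∧ M.evalFrom p w = q}

def QF (u : List (α × Bool)) : Set σ := u.foldl (dstep M) {M.start}

def AccT (T : Set σ) : Prop :=
  ∃ p ∈ T, ∃ w, FreeGroup.mk w = 1 ∧ M.evalFrom p w ∈ M.accept

lemma QF_append (u w : List (α × Bool)) :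
    QF M (u ++ w) = w.foldl (dstep M) (QF M u) := List.foldl_append

lemma foldl_sound : ∀ (u : List (α × Bool)) (T : Set σ), ∀ q ∈ u.foldl (dstep M) T,
    ∃ p ∈ T, ∃ w, FreeGroup.mk w = FreeGroup.mk u ∧ M.evalFrom p w = q := by
  intro u
  induction u with
  | nil => exact fun T q hq => ⟨q, hq, [], by simp, rfl⟩
  | cons a u ih =>
    intro T q hq
    obtain ⟨p1, hp1, w2, hw2, he2⟩ := ih (dstep M T a) q hq
    obtain ⟨p, hp, w1, hw1, he1⟩ := hp1
    refine ⟨p, hp, w1 ++ w2, ?_, ?_⟩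
    · rw [← FreeGroup.mul_mk, hw1, hw2, FreeGroup.mul_mk]; rfl
    · rw [DFA.evalFrom_of_append, he1, he2]

lemma mk_eq_of_red {L1 L2 : List (α × Bool)} (h : FreeGroup.Red L1 L2) :
    FreeGroup.mk L1 = FreeGroup.mk L2 :=
  FreeGroup.Red.exact.2 ⟨L2, h, FreeGroup.Red.refl⟩

lemma foldl_complete : ∀ (u w : List (α × Bool)) (T : Set σ) (p : σ), p ∈ T →
    FreeGroup.Red w u →
    ∃ p' ∈ u.foldl (dstep M) T, ∃ w', FreeGroup.mk w' = 1 ∧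
      M.evalFrom p' w' = M.evalFrom p w := by
  intro u
  induction u with
  | nil =>
    intro w T p hp hred
    refine ⟨p, hp, w, ?_, rfl⟩
    have := mk_eq_of_red hred
    simpa [FreeGroup.one_eq_mk] using this
  | cons a u ih =>
    intro w T p hp hred
    have hred' : FreeGroup.Red w ([a] ++ u) := hred
    obtain ⟨w1, w2, rfl, h1, h2⟩ := FreeGroup.Red.to_append_iff.1 hred'
    have hp1 : M.evalFrom p w1 ∈ dstep M T a :=
      ⟨p, hp, w1, mk_eq_of_red h1, rfl⟩
    obtain ⟨p', hp', w', hw', he'⟩ := ih w2 (dstep M T a) (M.evalFrom p w1) hp1 h2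
    exact ⟨p', hp', w', hw', by rw [he', DFA.evalFrom_of_append]⟩

lemma mem_S_iff {S : Set (FreeGroup α)} (hS : FreeGroup.mk '' M.accepts = S)
    {u : List (α × Bool)} (hu : RedW u) :
    FreeGroup.mk u ∈ S ↔ AccT M (QF M u) := by
  have hred : FreeGroup.reduce u = u := reduce_eq_self hu
  constructor
  · rintro hmem
    rw [← hS] at hmem
    obtain ⟨w, hwL, hwmk⟩ := hmem
    have hredw : FreeGroup.Red w u := by
      have : FreeGroup.reduce w = FreeGroup.reduce u := FreeGroup.reduce.sound hwmk
      rw [hred] at this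
      rw [← this]
      exact FreeGroup.reduce.red
    obtain ⟨p', hp', w', hw', he'⟩ :=
      foldl_complete M u w {M.start} M.start rfl hredw
    refine ⟨p', hp', w', hw', ?_⟩
    rw [he']
    exact (DFA.mem_accepts _).1 hwL
  · rintro ⟨p', hp', w', hw', hacc⟩
    obtain ⟨p, hp, w, hw, he⟩ := foldl_sound M u {M.start} p' hp'
    have hpstart : p = M.start := hp
    rw [← hS]
    refine ⟨w ++ w', ?_, ?_⟩
    · show M.evalFrom M.start (w ++ w') ∈ M.accept
      rw [DFA.evalFrom_of_append]
      rw [hpstart] at he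
      rw [he]
      exact hacc
    · rw [← FreeGroup.mul_mk, hw, hw', mul_one]
end Auto


section Count
variable (α : Type*) [Fintype α] [DecidableEq α]

def okA (x : Option (α × Bool)) (a : α × Bool) : Prop :=
  match x with
  | none => True
  | some c => nok c a

instance (x : Option (α × Bool)) : DecidablePred (okA α x) := fun a => by
  cases x <;> (unfold okA; infer_instance)

lemma okA_iff (x : Option (α × Bool)) (a : α × Bool) :
    okA α x a ↔ ∀ c ∈ x, nok c a := by cases x <;> simp [okA]

def sphA : ℕ → Finset (List (α × Bool))
  | 0 => {[]}
  | n+1 => (sphA n).biUnion fun u =>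
      (Finset.univ.filter (okA α u.getLast?)).image (fun a => u ++ [a])

lemma mem_sphA (n : ℕ) (u : List (α × Bool)) :
    u ∈ sphA α n ↔ RedW u ∧ u.length = n := by
  induction n generalizing u with
  | zero =>
    simp only [sphA, Finset.mem_singleton, List.length_eq_zero_iff]
    constructor
    · rintro rfl; exact ⟨List.isChain_nil, rfl⟩
    · rintro ⟨-, rfl⟩; rfl
  | succ n ih =>
    simp only [sphA, Finset.mem_biUnion, Finset.mem_image, Finset.mem_filter,
      Finset.mem_univ, true_and]
    constructor
    · rintro ⟨v, hv, a, ha, rfl⟩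
      obtain ⟨hvred, hvlen⟩ := (ih v).1 hv
      refine ⟨List.isChain_append.2 ⟨hvred, List.isChain_singleton a, ?_⟩, by simp [hvlen]⟩
      intro x hx y hy
      simp only [List.head?_cons, Option.mem_def, Option.some.injEq] at hy
      subst hy
      exact (okA_iff α _ _).1 ha x hx
    · rintro ⟨hred, hlen⟩
      have hne : u ≠ [] := by rintro rfl; simp at hlen
      refine ⟨u.dropLast, (ih _).2 ⟨hred.prefix (List.dropLast_prefix u), ?_⟩,
        u.getLast hne, ?_, List.dropLast_append_getLast hne⟩
      · simp [List.length_dropLast, hlen]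
      · rw [okA_iff]
        intro x hx
        have h2 : List.Chain' nok (u.dropLast ++ [u.getLast hne]) := by
          rw [List.dropLast_append_getLast hne]; exact hred
        exact (List.isChain_append.1 h2).2.2 x hx (u.getLast hne) (by simp)

lemma filter_okA_some (c : α × Bool) :
    (Finset.univ.filter (okA α (some c))) = Finset.univ.erase (c.1, !c.2) := by
  ext a
  simp [okA, nok, Finset.mem_erase, and_comm]

lemma card_filter_okA_ge (x : Option (α × Bool)) :
    Fintype.card (α × Bool) - 1 ≤ (Finset.univ.filter (okA α x)).card := by
  cases x with
  | none =>
    have h : (Finset.univ.filter (okA α none)) = (Finset.univ : Finset (α × Bool)) :=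
      Finset.filter_true_of_mem (fun _ _ => trivial)
    rw [h, Finset.card_univ]
    omega
  | some c =>
    rw [filter_okA_some, Finset.card_erase_of_mem (Finset.mem_univ _), Finset.card_univ]

lemma card_filter_okA_le (x : Option (α × Bool)) :
    (Finset.univ.filter (okA α x)).card ≤ Fintype.card (α × Bool) :=
  le_trans (Finset.card_filter_le _ _) (le_of_eq (Finset.card_univ))

lemma card_sphA_ge (n : ℕ) :
    (Fintype.card (α × Bool) - 1) ^ n ≤ (sphA α n).card := by
  induction n with
  | zero => simp [sphA]
  | succ n ih =>
    rw [sphA]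
    rw [Finset.card_biUnion]
    · calc (Fintype.card (α × Bool) - 1) ^ (n+1)
          = (Fintype.card (α × Bool) - 1) ^ n * (Fintype.card (α × Bool) - 1) := by ring
        _ ≤ (sphA α n).card * (Fintype.card (α × Bool) - 1) :=
            Nat.mul_le_mul_right _ ih
        _ = ∑ _u ∈ sphA α n, (Fintype.card (α × Bool) - 1) := by
            rw [Finset.sum_const, smul_eq_mul, mul_comm]
        _ ≤ ∑ u ∈ sphA α n, ((Finset.univ.filter (okA α u.getLast?)).image
              (fun a => u ++ [a])).card := by
            refine Finset.sum_le_sum fun u _ => ?_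
            rw [Finset.card_image_of_injective _ (fun a b h => by simpa using h)]
            exact card_filter_okA_ge α _
    · intro u hu v hv huv
      simp only [Function.onFun, Finset.disjoint_left]
      intro w hw hw'
      simp only [Finset.mem_image] at hw hw'
      obtain ⟨a, -, rfl⟩ := hw
      obtain ⟨b, -, hev⟩ := hw'
      apply huv
      have := congrArg List.dropLast hev
      simpa [List.dropLast_concat] using this.symm

def extA : (α × Bool) → ℕ → Finset (List (α × Bool))
  | _, 0 => {[]}
  | c, n+1 => (Finset.univ.filter (nok c)).biUnion fun a => (extA a n).image (a :: ·)

lemma mem_extA (n : ℕ) (c : α × Bool) (w : List (α × Bool)) :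
    w ∈ extA α c n ↔ RedW (c :: w) ∧ w.length = n := by
  induction n generalizing c w with
  | zero =>
    simp only [extA, Finset.mem_singleton, List.length_eq_zero_iff]
    constructor
    · rintro rfl; exact ⟨List.isChain_singleton c, rfl⟩
    · rintro ⟨-, rfl⟩; rfl
  | succ n ih =>
    simp only [extA, Finset.mem_biUnion, Finset.mem_image, Finset.mem_filter,
      Finset.mem_univ, true_and]
    constructor
    · rintro ⟨a, ha, v, hv, rfl⟩
      obtain ⟨hvred, hvlen⟩ := (ih a v).1 hv
      exact ⟨List.isChain_cons_cons.2 ⟨ha, hvred⟩, by simp [hvlen]⟩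
    · rintro ⟨hred, hlen⟩
      match w with
      | a :: v =>
        obtain ⟨h1, h2⟩ := List.isChain_cons_cons.1 hred
        exact ⟨a, h1, v, (ih a v).2 ⟨h2, by simpa using hlen⟩, rfl⟩

lemma card_extA_le (n : ℕ) (c : α × Bool) :
    (extA α c n).card ≤ (Fintype.card (α × Bool) - 1) ^ n := by
  induction n generalizing c with
  | zero => simp [extA]
  | succ n ih =>
    calc (extA α c (n+1)).card
        ≤ ∑ a ∈ Finset.univ.filter (nok c), ((extA α a n).image (a :: ·)).card :=
          Finset.card_biUnion_le
      _ ≤ ∑ a ∈ Finset.univ.filter (nok c), (Fintype.card (α × Bool) - 1) ^ n := by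
          refine Finset.sum_le_sum fun a _ => ?_
          exact le_trans (Finset.card_image_le) (ih a)
      _ ≤ (Fintype.card (α × Bool) - 1) * (Fintype.card (α × Bool) - 1) ^ n := by
          rw [Finset.sum_const, smul_eq_mul]
          refine Nat.mul_le_mul_right _ ?_
          have : (Finset.univ.filter (nok c)) = Finset.univ.erase (c.1, !c.2) := by
            ext a; simp [nok, Finset.mem_erase, and_comm]
          rw [this, Finset.card_erase_of_mem (Finset.mem_univ _), Finset.card_univ]
      _ = (Fintype.card (α × Bool) - 1) ^ (n+1) := by ring
end Count

section Count2
variable (α : Type*) [Fintype α] [DecidableEq α]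

def extO : Option (α × Bool) → ℕ → Finset (List (α × Bool))
  | none, n => sphA α n
  | some c, n => extA α c n

lemma mem_extO (x : Option (α × Bool)) (n : ℕ) (w : List (α × Bool)) :
    w ∈ extO α x n ↔ RedW w ∧ (∀ c ∈ x, ∀ h ∈ w.head?, nok c h) ∧ w.length = n := by
  cases x with
  | none => simp [extO, mem_sphA]
  | some c =>
    rw [extO, mem_extA]
    rw [show RedW (c :: w) ↔ _ from List.isChain_cons]
    constructor
    · rintro ⟨⟨h1, h2⟩, h3⟩
      exact ⟨h2, by simpa using h1, h3⟩
    · rintro ⟨h2, h1, h3⟩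
      exact ⟨⟨by simpa using h1 c rfl, h2⟩, h3⟩

lemma exists_nok (hc : 2 ≤ Fintype.card (α × Bool)) (c : α × Bool) :
    ∃ a, nok c a := by
  have : Nontrivial (α × Bool) := Fintype.one_lt_card_iff_nontrivial.1 hc
  exact exists_ne (c.1, !c.2)

lemma exists_pad (hc : 2 ≤ Fintype.card (α × Bool)) :
    ∀ (k : ℕ) (l : List (α × Bool)), l ≠ [] → RedW l →
      ∃ p : List (α × Bool), p.length = k ∧ RedW (l ++ p) := by
  intro k
  induction k with
  | zero => exact fun l _ h => ⟨[], rfl, by simpa using h⟩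
  | succ k ih =>
    intro l hne hl
    obtain ⟨p, hp, hred⟩ := ih l hne hl
    have hne2 : l ++ p ≠ [] := fun h => hne (List.append_eq_nil_iff.1 h).1
    obtain ⟨a, ha⟩ := exists_nok α hc ((l ++ p).getLast hne2)
    refine ⟨p ++ [a], by simp [hp], ?_⟩
    rw [← List.append_assoc]
    refine List.isChain_append.2 ⟨hred, List.isChain_singleton a, ?_⟩
    intro x hx y hy
    simp only [List.head?_cons, Option.mem_def, Option.some.injEq] at hy
    subst hy
    rw [List.getLast?_eq_getLast hne2, Option.mem_def, Option.some.injEq] at hx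
    rw [← hx]
    exact ha

variable (Dead : List (α × Bool) → Prop) [DecidablePred Dead]

def aliveA (n : ℕ) : Finset (List (α × Bool)) := (sphA α n).filter (fun u => ¬ Dead u)

lemma mem_aliveA (n : ℕ) (u : List (α × Bool)) :
    u ∈ aliveA α Dead n ↔ (RedW u ∧ u.length = n) ∧ ¬ Dead u := by
  rw [aliveA, Finset.mem_filter, mem_sphA]

lemma alive_subset (hmono : ∀ u w, Dead u → Dead (u ++ w)) (n d : ℕ) :
    aliveA α Dead (n + d) ⊆ (aliveA α Dead n).biUnion
      (fun u => ((extO α u.getLast? d).filter (fun w => ¬ Dead (u ++ w))).image (u ++ ·)) := by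
  intro v hv
  rw [aliveA, Finset.mem_filter, mem_sphA] at hv
  obtain ⟨⟨hred, hlen⟩, halive⟩ := hv
  have htd : v.take n ++ v.drop n = v := List.take_append_drop n v
  have hredt : RedW (v.take n) := hred.prefix (List.take_prefix n v)
  have hredd : RedW (v.drop n) := hred.suffix (List.drop_suffix n v)
  have hlent : (v.take n).length = n := by
    rw [List.length_take]; omega
  have hlend : (v.drop n).length = d := by
    rw [List.length_drop]; omega
  have hj : ∀ c ∈ (v.take n).getLast?, ∀ h ∈ (v.drop n).head?, nok c h := by
    have : List.Chain' nok (v.take n ++ v.drop n) := by rwa [htd]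
    exact (List.isChain_append.1 this).2.2
  rw [Finset.mem_biUnion]
  refine ⟨v.take n, ?_, ?_⟩
  · rw [aliveA, Finset.mem_filter, mem_sphA]
    exact ⟨⟨hredt, hlent⟩, fun hd => halive (htd ▸ hmono _ _ hd)⟩
  · rw [Finset.mem_image]
    refine ⟨v.drop n, ?_, htd⟩
    rw [Finset.mem_filter, mem_extO]
    exact ⟨⟨hredd, hj, hlend⟩, by rwa [htd]⟩

lemma card_extO_le (c : α × Bool) (n : ℕ) :
    (extO α (some c) n).card ≤ (Fintype.card (α × Bool) - 1) ^ n := card_extA_le α n c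

lemma alive_le (hmono : ∀ u w, Dead u → Dead (u ++ w)) {n : ℕ} (hn : 1 ≤ n) (d : ℕ) :
    (aliveA α Dead (n + d)).card ≤
      (aliveA α Dead n).card * (Fintype.card (α × Bool) - 1) ^ d := by
  refine le_trans (Finset.card_le_card (alive_subset α Dead hmono n d)) ?_
  refine le_trans Finset.card_biUnion_le ?_
  calc ∑ u ∈ aliveA α Dead n,
        (((extO α u.getLast? d).filter (fun w => ¬ Dead (u ++ w))).image (u ++ ·)).card
      ≤ ∑ _u ∈ aliveA α Dead n, (Fintype.card (α × Bool) - 1) ^ d := by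
        refine Finset.sum_le_sum fun u hu => ?_
        refine le_trans Finset.card_image_le ?_
        refine le_trans (Finset.card_filter_le _ _) ?_
        have hune : u ≠ [] := by
          rw [aliveA, Finset.mem_filter, mem_sphA] at hu
          intro h
          rw [h] at hu
          simp at hu
          omega
        rw [List.getLast?_eq_getLast hune]
        exact card_extO_le α _ d
    _ = (aliveA α Dead n).card * (Fintype.card (α × Bool) - 1) ^ d := by
        rw [Finset.sum_const, smul_eq_mul]

end Count2

section Count3
variable (α : Type*) [Fintype α] [DecidableEq α]
variable (Dead : List (α × Bool) → Prop) [DecidablePred Dead]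

lemma alive_step (hc : 2 ≤ Fintype.card (α × Bool))
    (hmono : ∀ u w, Dead u → Dead (u ++ w)) (B : ℕ)
    (hub : ∀ u, RedW u → ∃ w, w.length ≤ B ∧ RedW (u ++ w) ∧ Dead (u ++ w))
    {n : ℕ} (hn : 1 ≤ n) :
    (aliveA α Dead (n + (B + 1))).card ≤
      (aliveA α Dead n).card * ((Fintype.card (α × Bool) - 1) ^ (B + 1) - 1) := by
  refine le_trans (Finset.card_le_card (alive_subset α Dead hmono n (B + 1))) ?_
  refine le_trans Finset.card_biUnion_le ?_
  calc ∑ u ∈ aliveA α Dead n,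
        (((extO α u.getLast? (B + 1)).filter (fun w => ¬ Dead (u ++ w))).image (u ++ ·)).card
      ≤ ∑ _u ∈ aliveA α Dead n, ((Fintype.card (α × Bool) - 1) ^ (B + 1) - 1) := by
        refine Finset.sum_le_sum fun u hu => ?_
        refine le_trans Finset.card_image_le ?_
        rw [aliveA, Finset.mem_filter, mem_sphA] at hu
        obtain ⟨⟨hured, hulen⟩, hualive⟩ := hu
        have hune : u ≠ [] := by
          intro h; rw [h] at hulen; simp at hulen; omega
        -- construct the dead witness of length exactly B+1
        obtain ⟨w', hw'len, hw'red, hw'dead⟩ := hub u hured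
        have hne2 : u ++ w' ≠ [] := fun h => hune (List.append_eq_nil_iff.1 h).1
        obtain ⟨p, hplen, hpred⟩ := exists_pad α hc (B + 1 - w'.length) (u ++ w') hne2 hw'red
        set w0 : List (α × Bool) := w' ++ p with hw0
        have hw0len : w0.length = B + 1 := by
          rw [hw0, List.length_append, hplen]; omega
        have huw0red : RedW (u ++ w0) := by
          rw [hw0, ← List.append_assoc]; exact hpred
        have hw0dead : Dead (u ++ w0) := by
          rw [hw0, ← List.append_assoc]; exact hmono _ _ hw'dead
        have hw0mem : w0 ∈ extO α u.getLast? (B + 1) := by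
          rw [mem_extO]
          refine ⟨huw0red.suffix (List.suffix_append u w0), ?_, hw0len⟩
          exact (List.isChain_append.1 huw0red).2.2
        have hsub : (extO α u.getLast? (B + 1)).filter (fun w => ¬ Dead (u ++ w)) ⊆
            (extO α u.getLast? (B + 1)).erase w0 := by
          intro w hw
          rw [Finset.mem_filter] at hw
          rw [Finset.mem_erase]
          refine ⟨?_, hw.1⟩
          intro h
          rw [h] at hw
          exact hw.2 hw0dead
        refine le_trans (Finset.card_le_card hsub) ?_
        rw [Finset.card_erase_of_mem hw0mem]
        refine Nat.sub_le_sub_right ?_ 1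
        rw [List.getLast?_eq_getLast hune]
        exact card_extO_le α _ _
    _ = (aliveA α Dead n).card * ((Fintype.card (α × Bool) - 1) ^ (B + 1) - 1) := by
        rw [Finset.sum_const, smul_eq_mul]

lemma card_sphA_one_le : (sphA α 1).card ≤ Fintype.card (α × Bool) := by
  have : sphA α 1 = (Finset.univ.filter (okA α (([] : List (α × Bool))).getLast?)).image
      (fun a => [] ++ [a]) := by
    rw [show (1 : ℕ) = 0 + 1 from rfl, sphA, sphA, Finset.singleton_biUnion]
  rw [this]
  refine le_trans Finset.card_image_le ?_
  exact card_filter_okA_le α _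

lemma card_aliveA_le_sphA (n : ℕ) : (aliveA α Dead n).card ≤ (sphA α n).card :=
  Finset.card_filter_le _ _

lemma alive_iter (hc : 2 ≤ Fintype.card (α × Bool))
    (hmono : ∀ u w, Dead u → Dead (u ++ w)) (B : ℕ)
    (hub : ∀ u, RedW u → ∃ w, w.length ≤ B ∧ RedW (u ++ w) ∧ Dead (u ++ w)) :
    ∀ k : ℕ, (aliveA α Dead (1 + k * (B + 1))).card ≤
      Fintype.card (α × Bool) * ((Fintype.card (α × Bool) - 1) ^ (B + 1) - 1) ^ k := by
  intro k
  induction k with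
  | zero =>
    simpa using le_trans (card_aliveA_le_sphA α Dead 1) (card_sphA_one_le α)
  | succ k ih =>
    have h1 : 1 + (k + 1) * (B + 1) = (1 + k * (B + 1)) + (B + 1) := by ring
    rw [h1]
    refine le_trans (alive_step α Dead hc hmono B hub (by omega)) ?_
    calc (aliveA α Dead (1 + k * (B+1))).card * ((Fintype.card (α × Bool) - 1) ^ (B + 1) - 1)
        ≤ (Fintype.card (α × Bool) * ((Fintype.card (α × Bool) - 1) ^ (B + 1) - 1) ^ k) *
            ((Fintype.card (α × Bool) - 1) ^ (B + 1) - 1) := Nat.mul_le_mul_right _ ih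
      _ = Fintype.card (α × Bool) * ((Fintype.card (α × Bool) - 1) ^ (B + 1) - 1) ^ (k + 1) := by
          ring

/-- The general per-`m` bound. -/
lemma alive_bound (hc : 2 ≤ Fintype.card (α × Bool))
    (hmono : ∀ u w, Dead u → Dead (u ++ w)) (B : ℕ)
    (hub : ∀ u, RedW u → ∃ w, w.length ≤ B ∧ RedW (u ++ w) ∧ Dead (u ++ w))
    {m : ℕ} (hm : 1 ≤ m) :
    (aliveA α Dead m).card ≤
      (Fintype.card (α × Bool) * (Fintype.card (α × Bool) - 1) ^ (B + 1)) *
        ((Fintype.card (α × Bool) - 1) ^ (B + 1) - 1) ^ ((m - 1) / (B + 1)) := by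
  set D := B + 1 with hD
  set k := (m - 1) / D with hk
  set j := (m - 1) % D with hj
  have hmkj : m = (1 + k * D) + j := by
    have h1 : k * D + j = m - 1 := by rw [hk, hj, Nat.mul_comm]; exact Nat.div_add_mod _ _
    omega
  calc (aliveA α Dead m).card
      ≤ (aliveA α Dead (1 + k * D)).card * (Fintype.card (α × Bool) - 1) ^ j := by
        rw [hmkj]
        exact alive_le α Dead hmono (by omega) j
    _ ≤ (Fintype.card (α × Bool) * ((Fintype.card (α × Bool) - 1) ^ D - 1) ^ k) *
          (Fintype.card (α × Bool) - 1) ^ D := by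
        refine Nat.mul_le_mul (alive_iter α Dead hc hmono B hub k) ?_
        refine Nat.pow_le_pow_right (by omega) ?_
        have : j < D := Nat.mod_lt _ (by omega)
        omega
    _ = (Fintype.card (α × Bool) * (Fintype.card (α × Bool) - 1) ^ D) *
          ((Fintype.card (α × Bool) - 1) ^ D - 1) ^ k := by ring

lemma card_aliveA_zero_le : (aliveA α Dead 0).card ≤ 1 := by
  refine le_trans (card_aliveA_le_sphA α Dead 0) ?_
  rw [sphA]
  simp

end Count3

lemma density_zero_aux {α : Type*} [Fintype α] [DecidableEq α]
    (hc : 4 ≤ Fintype.card (α × Bool))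
    (Dead : List (α × Bool) → Prop) [DecidablePred Dead]
    (hmono : ∀ u w, Dead u → Dead (u ++ w)) (B : ℕ)
    (hub : ∀ u, RedW u → ∃ w, w.length ≤ B ∧ RedW (u ++ w) ∧ Dead (u ++ w))
    (S : Set (FreeGroup α)) (hSdead : ∀ g ∈ S, ¬ Dead (FreeGroup.toWord g)) :
    Tendsto (ballRatio S) atTop (𝓝 0) := by
  classical
  set c : ℕ := Fintype.card (α × Bool) with hcdef
  set r1 : ℕ := c - 1 with hr1
  set D : ℕ := B + 1 with hD
  set K : ℕ := r1 ^ D - 1 with hK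
  set C1 : ℕ := c * r1 ^ D with hC1
  have hr1ge : 3 ≤ r1 := by omega
  have hKge : 1 ≤ K := by
    have : r1 ^ D ≥ 3 ^ 1 := by
      calc (3:ℕ) ^ 1 ≤ r1 ^ 1 := by simpa using hr1ge
        _ ≤ r1 ^ D := Nat.pow_le_pow_right (by omega) (by omega)
    simp at this
    omega
  -- finiteness instances
  have hfin : ∀ n : ℕ, Finite {g : FreeGroup α // (FreeGroup.toWord g).length ≤ n} := by
    intro n
    have hf : {l : List (α × Bool) | l.length ≤ n}.Finite := List.finite_length_le _ n
    have := hf.to_subtype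
    exact Finite.of_injective
      (fun g => (⟨g.1.toWord, g.2⟩ : {l : List (α × Bool) | l.length ≤ n}))
      (fun g h hg => by
        apply Subtype.ext
        apply FreeGroup.toWord_injective
        simpa using hg)
  -- numerator bound
  have numBound : ∀ n : ℕ, 1 ≤ n →
      Nat.card {g : FreeGroup α // g ∈ S ∧ (FreeGroup.toWord g).length ≤ n} ≤
        1 + n * (C1 * K ^ ((n - 1) / D)) := by
    intro n hn
    set W : Finset (List (α × Bool)) :=
      (Finset.range (n + 1)).biUnion (fun m => aliveA α Dead m) with hW
    have hmem : ∀ g : {g : FreeGroup α // g ∈ S ∧ (FreeGroup.toWord g).length ≤ n},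
        FreeGroup.toWord g.1 ∈ W := by
      rintro ⟨g, hgS, hglen⟩
      rw [hW, Finset.mem_biUnion]
      refine ⟨g.toWord.length, Finset.mem_range.2 (by omega), ?_⟩
      rw [mem_aliveA]
      exact ⟨⟨redW_toWord g, rfl⟩, hSdead g hgS⟩
    have h1 : Nat.card {g : FreeGroup α // g ∈ S ∧ (FreeGroup.toWord g).length ≤ n} ≤
        Nat.card {l // l ∈ W} := by
      refine Nat.card_le_card_of_injective (fun g => ⟨FreeGroup.toWord g.1, hmem g⟩) ?_
      intro g h hgh
      apply Subtype.ext
      apply FreeGroup.toWord_injective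
      simpa using hgh
    rw [Nat.card_eq_finsetCard] at h1
    refine le_trans h1 ?_
    refine le_trans Finset.card_biUnion_le ?_
    rw [Finset.sum_range_succ']
    have hterm : ∀ m, m < n → (aliveA α Dead (m + 1)).card ≤ C1 * K ^ ((n - 1) / D) := by
      intro m hm
      refine le_trans (alive_bound α Dead (by omega) hmono B hub (by omega)) ?_
      simp only [← hcdef, ← hr1, ← hD, ← hK, ← hC1]
      refine Nat.mul_le_mul_left _ ?_
      refine Nat.pow_le_pow_right hKge ?_
      refine Nat.div_le_div_right ?_
      omega
    calc (∑ i ∈ Finset.range n, (aliveA α Dead (i + 1)).card) + (aliveA α Dead 0).card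
        ≤ (∑ _i ∈ Finset.range n, C1 * K ^ ((n - 1) / D)) + 1 := by
          refine Nat.add_le_add ?_ (card_aliveA_zero_le α Dead)
          exact Finset.sum_le_sum fun i hi => hterm i (Finset.mem_range.1 hi)
      _ = 1 + n * (C1 * K ^ ((n - 1) / D)) := by
          rw [Finset.sum_const, smul_eq_mul, Finset.card_range]
          ring
  -- denominator bound
  have denBound : ∀ n : ℕ, r1 ^ n ≤
      Nat.card {g : FreeGroup α // (FreeGroup.toWord g).length ≤ n} := by
    intro n
    have := hfin n
    have hinj : Function.Injective
        (fun u : {l // l ∈ sphA α n} =>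
          (⟨FreeGroup.mk u.1, by
            have hu := (mem_sphA α n u.1).1 u.2
            rw [toWord_mk_redW hu.1, hu.2]⟩ :
            {g : FreeGroup α // (FreeGroup.toWord g).length ≤ n})) := by
      intro u v huv
      apply Subtype.ext
      have hu := (mem_sphA α n u.1).1 u.2
      have hv := (mem_sphA α n v.1).1 v.2
      have : (FreeGroup.mk u.1).toWord = (FreeGroup.mk v.1).toWord := by
        rw [Subtype.mk.injEq] at huv
        rw [huv]
      rwa [toWord_mk_redW hu.1, toWord_mk_redW hv.1] at this
    have h2 := Nat.card_le_card_of_injective _ hinj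
    rw [Nat.card_eq_finsetCard] at h2
    exact le_trans (card_sphA_ge α n) h2
  -- real-valued bound
  have hr1R : (1:ℝ) < (r1:ℝ) := by exact_mod_cast (by omega : 1 < r1)
  set Q : ℝ := (r1 : ℝ) ^ D with hQ
  have hQgt : (1:ℝ) < Q := one_lt_pow₀ hr1R (by omega)
  have hQpos : (0:ℝ) < Q := lt_trans one_pos hQgt
  set ρ : ℝ := (K : ℝ) / Q with hρ
  have hKQ : (K:ℝ) < Q := by
    have h1 : 1 ≤ r1 ^ D := Nat.one_le_pow _ _ (by omega)
    have h2 : (K:ℝ) = (r1:ℝ)^D - 1 := by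
      rw [hK, Nat.cast_sub h1]
      push_cast
      ring
    rw [h2, hQ]
    linarith
  have hρlt : ρ < 1 := (div_lt_one hQpos).2 hKQ
  have hρnn : 0 ≤ ρ := div_nonneg (Nat.cast_nonneg _) hQpos.le
  set ψ : ℕ → ℝ := fun k =>
    (1/(r1:ℝ)) * (1/Q)^k + (((D:ℝ)*(C1:ℝ))/(r1:ℝ)) * (((k:ℝ)+1) * ρ^k) with hψ
  have hψ0 : Tendsto ψ atTop (𝓝 0) := by
    have t1 : Tendsto (fun k:ℕ => (1/Q)^k) atTop (𝓝 0) :=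
      tendsto_pow_atTop_nhds_zero_of_lt_one (by positivity) ((div_lt_one hQpos).2 hQgt)
    have t2 : Tendsto (fun k:ℕ => (k:ℝ) * ρ^k) atTop (𝓝 0) := by
      simpa using tendsto_pow_const_mul_const_pow_of_abs_lt_one 1
        (abs_lt.2 ⟨by linarith, hρlt⟩)
    have t3 : Tendsto (fun k:ℕ => ρ^k) atTop (𝓝 0) :=
      tendsto_pow_atTop_nhds_zero_of_lt_one hρnn hρlt
    have t4 : Tendsto (fun k:ℕ => ((k:ℝ)+1) * ρ^k) atTop (𝓝 0) := by
      have h := t2.add t3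
      simp only [add_zero] at h
      refine h.congr fun k => ?_
      ring
    have h := (t1.const_mul (1/(r1:ℝ))).add (t4.const_mul (((D:ℝ)*(C1:ℝ))/(r1:ℝ)))
    simp only [mul_zero, add_zero] at h
    exact h.congr fun k => by simp only [hψ]
  -- the main inequality
  have hmain : ∀ n:ℕ, 1 ≤ n → ballRatio S n ≤ ψ ((n-1)/D) := by
    intro n hn
    set k := (n-1)/D with hk
    have h1 : D * k + (n-1) % D = n - 1 := Nat.div_add_mod _ _
    have h2 : (n-1) % D < D := Nat.mod_lt _ (by omega)
    have hnle : n ≤ D*k + D := by omega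
    have hnge : 1 + D*k ≤ n := by omega
    have hr1p : (0:ℝ) < (r1:ℝ) := by linarith
    have hb1 : (Nat.card {g : FreeGroup α // g ∈ S ∧ (FreeGroup.toWord g).length ≤ n} : ℝ) ≤
        1 + ((D*k+D : ℕ):ℝ) * ((C1:ℝ) * (K:ℝ)^k) := by
      have hb := numBound n hn
      have hb2 : (Nat.card {g : FreeGroup α // g ∈ S ∧ (FreeGroup.toWord g).length ≤ n} : ℝ) ≤
          1 + (n:ℝ) * ((C1:ℝ) * (K:ℝ)^k) := by
        exact_mod_cast hb
      refine le_trans hb2 ?_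
      have hcast : (n:ℝ) ≤ ((D*k+D : ℕ):ℝ) := by exact_mod_cast hnle
      have : (0:ℝ) ≤ (C1:ℝ) * (K:ℝ)^k := by positivity
      nlinarith
    have hb3 : (r1:ℝ) * Q^k ≤
        (Nat.card {g : FreeGroup α // (FreeGroup.toWord g).length ≤ n} : ℝ) := by
      have e1 : (r1:ℝ) * Q^k = (r1:ℝ)^(1 + D*k) := by
        rw [hQ, ← pow_mul, pow_add, pow_one]
      have e2 : (r1:ℝ)^(1 + D*k) ≤ (r1:ℝ)^n := by
        refine pow_le_pow_right₀ (by linarith) hnge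
      have e3 : (r1:ℝ)^n ≤
          (Nat.card {g : FreeGroup α // (FreeGroup.toWord g).length ≤ n} : ℝ) := by
        exact_mod_cast denBound n
      linarith [e1.le, e2, e3, e1.ge]
    have hdiv : ballRatio S n ≤
        (1 + ((D*k+D : ℕ):ℝ) * ((C1:ℝ) * (K:ℝ)^k)) / ((r1:ℝ) * Q^k) := by
      rw [ballRatio]
      refine div_le_div₀ (by positivity) hb1 (by positivity) hb3
    refine le_trans hdiv (le_of_eq ?_)
    rw [hψ, hρ]
    have hQk : Q^k ≠ 0 := by positivity
    have hr1ne : (r1:ℝ) ≠ 0 := by linarith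
    push_cast
    field_simp
    have hQQ : Q ^ k * Q⁻¹ ^ k = 1 := by rw [← mul_pow, mul_inv_cancel₀ hQpos.ne', one_pow]
    linear_combination (-((D:ℝ) * (k:ℝ) * (C1:ℝ) * (K:ℝ) ^ k + (D:ℝ) * (C1:ℝ) * (K:ℝ) ^ k + 1)) * hQQ
  -- squeeze
  have hk_tendsto : Tendsto (fun n:ℕ => (n-1)/D) atTop atTop := by
    refine tendsto_atTop_atTop.2 fun b => ⟨b*D+1, fun n hn => ?_⟩
    refine (Nat.le_div_iff_mul_le (by omega)).2 ?_
    omega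
  refine tendsto_of_tendsto_of_tendsto_of_le_of_le' tendsto_const_nhds
    (hψ0.comp hk_tendsto) ?_ ?_
  · refine Eventually.of_forall fun n => ?_
    rw [ballRatio]
    positivity
  · filter_upwards [eventually_ge_atTop 1] with n hn
    exact hmain n hn

section Auto2
variable {α : Type*} [DecidableEq α] {σ : Type*} (M : DFA (α × Bool) σ)

def stW (u : List (α × Bool)) : Set σ × Option (α × Bool) := (QF M u, u.getLast?)

def DeadW (S : Set (FreeGroup α)) (u : List (α × Bool)) : Prop :=
  ∀ w, RedW (u ++ w) → FreeGroup.mk (u ++ w) ∉ S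

lemma redW_append_congr {u v w : List (α × Bool)} (h : u.getLast? = v.getLast?)
    (hv : RedW v) (huw : RedW (u ++ w)) : RedW (v ++ w) := by
  obtain ⟨-, h2, h3⟩ := List.isChain_append.1 huw
  exact List.isChain_append.2 ⟨hv, h2, fun x hx y hy => h3 x (by rw [h]; exact hx) y hy⟩

lemma getLast?_append_congr {γ : Type*} {u v : List γ} (h : u.getLast? = v.getLast?)
    (w : List γ) : (u ++ w).getLast? = (v ++ w).getLast? := by
  cases w with
  | nil => simpa using h
  | cons a w => rw [List.getLast?_append_cons, List.getLast?_append_cons]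

lemma stW_append_congr {u v : List (α × Bool)} (h : stW M u = stW M v) (w : List (α × Bool)) :
    stW M (u ++ w) = stW M (v ++ w) := by
  have h1 : QF M u = QF M v := congrArg Prod.fst h
  have h2 : u.getLast? = v.getLast? := congrArg Prod.snd h
  rw [stW, stW, QF_append, QF_append, h1, getLast?_append_congr h2]

lemma mem_transfer {S : Set (FreeGroup α)} (hS : FreeGroup.mk '' M.accepts = S)
    {u v w : List (α × Bool)} (hst : stW M u = stW M v)
    (huw : RedW (u ++ w)) (hvw : RedW (v ++ w)) :
    FreeGroup.mk (u ++ w) ∈ S ↔ FreeGroup.mk (v ++ w) ∈ S := by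
  have h1 : QF M u = QF M v := congrArg Prod.fst hst
  rw [mem_S_iff M hS huw, mem_S_iff M hS hvw, QF_append, QF_append, h1]

lemma dead_transfer {S : Set (FreeGroup α)} (hS : FreeGroup.mk '' M.accepts = S)
    {u v : List (α × Bool)} (hu : RedW u) (hv : RedW v) (hst : stW M u = stW M v)
    (hd : DeadW S u) : DeadW S v := by
  intro w hw hmem
  have h2 : u.getLast? = v.getLast? := congrArg Prod.snd hst
  have huw : RedW (u ++ w) := redW_append_congr h2.symm hu hw
  exact hd w huw ((mem_transfer M hS hst huw hw).2 hmem)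

end Auto2

end

/-- A rational subset of a nonabelian free group with positive natural density
covers the group by finitely many two-sided translates. -/
theorem stmt14 {X : Type*} [Fintype X] [DecidableEq X] (hX : 2 ≤ Fintype.card X)
    (S : Set (FreeGroup X))
    (hrat : ∃ L : Set (List (X × Bool)), RegularLang L ∧ FreeGroup.mk '' L = S)
    (hpos : 0 < Filter.limsup (ballRatio S) Filter.atTop) :
    ∃ (k : ℕ) (a b : Fin k → FreeGroup X),
      (⋃ (i : Fin k) (j : Fin k), (fun s => a i * s * b j) '' S) = Set.univ := by
  classical
  obtain ⟨L, ⟨σ, instσ, M, hML⟩, hSL⟩ := hrat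
  haveI : Fintype σ := instσ
  have hS : FreeGroup.mk '' M.accepts = S := by rw [hML, hSL]
  have hcA : 4 ≤ Fintype.card (X × Bool) := by
    rw [Fintype.card_prod, Fintype.card_bool]; omega
  by_cases hcase : ∃ u : List (X × Bool), RedW u ∧
      ∀ w, RedW (u ++ w) → ¬ DeadW S (u ++ w)
  · -- Case 1: a cone all of whose points stay close to S; build the covering.
    obtain ⟨u₀, hu₀, halive⟩ := hcase
    have hext0 : ∀ s : Set σ × Option (X × Bool), ∃ w', ∀ u, RedW u → stW M u = s →
        (∃ v w'', RedW v ∧ stW M v = s ∧ RedW (v ++ w'') ∧ FreeGroup.mk (v ++ w'') ∈ S) →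
        RedW (u ++ w') ∧ FreeGroup.mk (u ++ w') ∈ S := by
      intro s
      by_cases hP : ∃ v w'', RedW v ∧ stW M v = s ∧ RedW (v ++ w'') ∧
          FreeGroup.mk (v ++ w'') ∈ S
      · obtain ⟨v, w'', hv, hsv, hvw, hvS⟩ := hP
        refine ⟨w'', fun u hu hsu _ => ?_⟩
        have hst : stW M v = stW M u := by rw [hsu, hsv]
        have hlast : v.getLast? = u.getLast? := congrArg Prod.snd hst
        have huw : RedW (u ++ w'') := redW_append_congr hlast hu hvw
        exact ⟨huw, (mem_transfer M hS hst hvw huw).1 hvS⟩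
      · exact ⟨[], fun u hu hsu h => absurd h hP⟩
    choose extw hextw using hext0
    have hcone : ∀ g : FreeGroup X, (∃ w, FreeGroup.toWord g = u₀ ++ w) →
        ∃ s : Set σ × Option (X × Bool), g * FreeGroup.mk (extw s) ∈ S := by
      rintro g ⟨w, hgw⟩
      have hgred : RedW (u₀ ++ w) := hgw ▸ redW_toWord g
      have hal : ¬ DeadW S (u₀ ++ w) := halive w hgred
      rw [DeadW] at hal
      push_neg at hal
      obtain ⟨w', hw'1, hw'2⟩ := hal
      refine ⟨stW M (FreeGroup.toWord g), ?_⟩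
      have h := hextw (stW M (FreeGroup.toWord g)) (FreeGroup.toWord g) (redW_toWord g) rfl
        ⟨FreeGroup.toWord g, w', redW_toWord g, rfl, by rw [hgw]; exact hw'1,
          by rw [hgw]; exact hw'2⟩
      obtain ⟨h1, h2⟩ := h
      rwa [← FreeGroup.mul_mk, FreeGroup.mk_toWord] at h2
    -- the finite set of left translates
    set Afin : Finset (FreeGroup X) :=
      ((Finset.range (u₀.length + 1)).biUnion (fun m => sphA X m)).biUnion
        (fun v => insert (FreeGroup.mk v * (FreeGroup.mk u₀)⁻¹)
          ((Finset.univ : Finset (X × Bool)).image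
            (fun sl => FreeGroup.mk v * FreeGroup.mk [sl] * (FreeGroup.mk u₀)⁻¹))) with hAfin
    have hcover : ∀ h : FreeGroup X, ∃ a ∈ Afin, ∃ w,
        FreeGroup.toWord (a⁻¹ * h) = u₀ ++ w := by
      intro h
      have hvmem : ∀ m, m ≤ u₀.length → ∀ v : List (X × Bool), RedW v → v.length = m →
          v ∈ (Finset.range (u₀.length + 1)).biUnion (fun m => sphA X m) := by
        intro m hm v hv hl
        exact Finset.mem_biUnion.2 ⟨m, Finset.mem_range.2 (by omega),
          (mem_sphA X m v).2 ⟨hv, hl⟩⟩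
      by_cases hlen : (FreeGroup.toWord h).length ≤ u₀.length
      · refine ⟨h * (FreeGroup.mk u₀)⁻¹, ?_, [], ?_⟩
        · rw [hAfin]
          refine Finset.mem_biUnion.2 ⟨FreeGroup.toWord h,
            hvmem _ hlen _ (redW_toWord h) rfl, ?_⟩
          have : h * (FreeGroup.mk u₀)⁻¹ =
              FreeGroup.mk (FreeGroup.toWord h) * (FreeGroup.mk u₀)⁻¹ := by
            rw [FreeGroup.mk_toWord]
          rw [this]
          exact Finset.mem_insert_self _ _
        · have : (h * (FreeGroup.mk u₀)⁻¹)⁻¹ * h = FreeGroup.mk u₀ := by group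
          rw [this, toWord_mk_redW hu₀, List.append_nil]
      · push_neg at hlen
        set v := FreeGroup.toWord h with hv
        set v1 := v.take u₀.length with hv1
        set w2 := v.drop u₀.length with hw2
        have hvred : RedW v := redW_toWord h
        have hw2ne : w2 ≠ [] := by
          rw [hw2, ← List.length_pos_iff]
          rw [List.length_drop]
          omega
        have hw2red : RedW w2 := hvred.suffix (List.drop_suffix _ _)
        have hv1red : RedW v1 := hvred.prefix (List.take_prefix _ _)
        have hv1len : v1.length = u₀.length := by
          rw [hv1, List.length_take]; omega
        -- choose a letter avoiding the two bad values
        set y0 : X × Bool := w2.head hw2ne with hy0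
        set x0 : X × Bool := u₀.getLast?.getD y0 with hx0
        have hsl : ∃ sl : X × Bool, sl ≠ x0 ∧ sl ≠ y0 := by
          by_contra hcon
          push_neg at hcon
          have hsub : (Finset.univ : Finset (X × Bool)) ⊆ {x0, y0} := by
            intro sl _
            rcases eq_or_ne sl x0 with h1 | h1
            · exact Finset.mem_insert.2 (Or.inl h1)
            · exact Finset.mem_insert.2 (Or.inr (Finset.mem_singleton.2 (hcon sl h1)))
          have h2 := Finset.card_le_card hsub
          rw [Finset.card_univ] at h2
          have h3 : ({x0, y0} : Finset (X × Bool)).card ≤ 2 :=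
            le_trans (Finset.card_insert_le _ _) (by simp)
          omega
        obtain ⟨sl, hsl1, hsl2⟩ := hsl
        set sl' : X × Bool := (sl.1, !sl.2) with hsl'
        have hslinv : (FreeGroup.mk [sl])⁻¹ = FreeGroup.mk [sl'] := by
          rw [FreeGroup.inv_mk]; rfl
        refine ⟨FreeGroup.mk v1 * FreeGroup.mk [sl] * (FreeGroup.mk u₀)⁻¹, ?_,
          [sl'] ++ w2, ?_⟩
        · rw [hAfin]
          refine Finset.mem_biUnion.2 ⟨v1, hvmem u₀.length le_rfl v1 hv1red hv1len, ?_⟩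
          refine Finset.mem_insert.2 (Or.inr ?_)
          exact Finset.mem_image.2 ⟨sl, Finset.mem_univ _, rfl⟩
        · have hval : (FreeGroup.mk v1 * FreeGroup.mk [sl] * (FreeGroup.mk u₀)⁻¹)⁻¹ * h =
              FreeGroup.mk ((u₀ ++ [sl']) ++ w2) := by
            have hh : h = FreeGroup.mk v1 * FreeGroup.mk w2 := by
              rw [FreeGroup.mul_mk]
              rw [hv1, hw2, List.take_append_drop]
              exact (FreeGroup.mk_toWord).symm
            rw [← FreeGroup.mul_mk, ← FreeGroup.mul_mk, ← hslinv, hh]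
            group
          have hred : RedW (u₀ ++ ([sl'] ++ w2)) := by
            refine List.isChain_append.2 ⟨hu₀, ?_, ?_⟩
            · show List.Chain' nok (sl' :: w2)
              refine List.isChain_cons.2 ⟨?_, hw2red⟩
              intro y hy
              have hyy : y = y0 := by
                have hh2 : w2.head? = some y0 := List.head?_eq_head hw2ne
                rw [hh2] at hy
                exact (Option.mem_some_iff.1 hy).symm
              intro hcon
              have hys : y = sl := by rw [hcon]; simp [hsl']
              exact hsl2 (hys.symm.trans hyy)
            · intro x hx y hy
              have hysl : y = sl' := by
                have : ([sl'] ++ w2).head? = some sl' := rfl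
                rw [this] at hy
                exact (Option.mem_some_iff.1 hy).symm
              have hx0x : x0 = x := by
                rw [hx0, Option.mem_def.1 hx]
                rfl
              intro hcon
              have h1 : sl' = (x.1, !x.2) := by rw [← hysl]; exact hcon
              have h2 : sl = x := by
                obtain ⟨ha1, ha2⟩ := Prod.ext_iff.1 h1
                simp only [hsl'] at ha1 ha2
                have : sl.2 = x.2 := by
                  cases hsl2' : sl.2 <;> cases hx2' : x.2 <;>
                    simp [hsl2', hx2'] at ha2 ⊢ <;> try rfl
                exact Prod.ext ha1 this
              exact hsl1 (h2.trans hx0x.symm)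
          have hred' : RedW ((u₀ ++ [sl']) ++ w2) := by
            rw [List.append_assoc]; exact hred
          rw [hval, toWord_mk_redW hred', List.append_assoc]
    -- assemble the covering
    set Bfin : Finset (FreeGroup X) :=
      Finset.univ.image (fun s : Set σ × Option (X × Bool) => (FreeGroup.mk (extw s))⁻¹)
      with hBfin
    have hfull : ∀ g : FreeGroup X, ∃ a ∈ Afin, ∃ b ∈ Bfin, ∃ s ∈ S, g = a * s * b := by
      intro g
      obtain ⟨a, ha, w, hw⟩ := hcover g
      obtain ⟨s', hs'⟩ := hcone (a⁻¹ * g) ⟨w, hw⟩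
      refine ⟨a, ha, (FreeGroup.mk (extw s'))⁻¹,
        Finset.mem_image.2 ⟨s', Finset.mem_univ _, rfl⟩,
        a⁻¹ * g * FreeGroup.mk (extw s'), hs', by group⟩
    set la := Afin.toList with hla
    set lb := Bfin.toList with hlb
    refine ⟨max la.length lb.length, fun i => la.getD i 1, fun j => lb.getD j 1, ?_⟩
    rw [Set.eq_univ_iff_forall]
    intro g
    obtain ⟨a, ha, b, hb, s, hsS, hgab⟩ := hfull g
    have hma : a ∈ la := by rw [hla]; exact Finset.mem_toList.2 ha
    have hmb : b ∈ lb := by rw [hlb]; exact Finset.mem_toList.2 hb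
    have hia : List.idxOf a la < la.length := List.idxOf_lt_length_iff.2 hma
    have hib : List.idxOf b lb < lb.length := List.idxOf_lt_length_iff.2 hmb
    refine Set.mem_iUnion.2 ⟨⟨List.idxOf a la, by omega⟩, Set.mem_iUnion.2
      ⟨⟨List.idxOf b lb, by omega⟩, ?_⟩⟩
    refine ⟨s, hsS, ?_⟩
    simp only
    rw [List.getD_eq_getElem _ _ (by simpa using hia),
      List.getD_eq_getElem _ _ (by simpa using hib),
      List.getElem_idxOf hia, List.getElem_idxOf hib]
    exact hgab.symm
  · -- Case 2: every cone contains a dead cone; density tends to zero.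
    push_neg at hcase
    have hall : ∀ u : List (X × Bool), RedW u →
        ∃ w, RedW (u ++ w) ∧ DeadW S (u ++ w) := by
      intro u hu
      obtain ⟨w, hw1, hw2⟩ := hcase u hu
      exact ⟨w, hw1, hw2⟩
    have hdw0 : ∀ s : Set σ × Option (X × Bool), ∃ w, ∀ u, RedW u → stW M u = s →
        RedW (u ++ w) ∧ DeadW S (u ++ w) := by
      intro s
      by_cases hP : ∃ v, RedW v ∧ stW M v = s
      · obtain ⟨v, hvred, hvs⟩ := hP
        obtain ⟨w, hw1, hw2⟩ := hall v hvred
        refine ⟨w, fun u hu hsu => ?_⟩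
        have hst : stW M v = stW M u := by rw [hsu, hvs]
        have hlast : v.getLast? = u.getLast? := congrArg Prod.snd hst
        have huw : RedW (u ++ w) := redW_append_congr hlast hu hw1
        exact ⟨huw, dead_transfer M hS hw1 huw (stW_append_congr M hst w) hw2⟩
      · exact ⟨[], fun u hu hsu => absurd ⟨u, hu, hsu⟩ hP⟩
    choose dwit hdwit using hdw0
    set B := Finset.univ.sup (fun s : Set σ × Option (X × Bool) => (dwit s).length) with hB
    have hub : ∀ u, RedW u → ∃ w, w.length ≤ B ∧ RedW (u ++ w) ∧ DeadW S (u ++ w) := by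
      intro u hu
      refine ⟨dwit (stW M u), ?_, (hdwit _ u hu rfl).1, (hdwit _ u hu rfl).2⟩
      rw [hB]
      exact Finset.le_sup (f := fun s : Set σ × Option (X × Bool) => (dwit s).length)
        (Finset.mem_univ _)
    have hmono : ∀ u w, DeadW S u → DeadW S (u ++ w) := by
      intro u w hd w' h1 h2
      rw [List.append_assoc] at h1 h2
      exact hd (w ++ w') h1 h2
    have hSdead : ∀ g ∈ S, ¬ DeadW S (FreeGroup.toWord g) := by
      intro g hg hd
      refine hd [] (by simpa using redW_toWord g) ?_
      rw [List.append_nil, FreeGroup.mk_toWord]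
      exact hg
    have h0 := density_zero_aux hcA (DeadW S) hmono B hub S hSdead
    rw [h0.limsup_eq] at hpos
    exact absurd hpos (lt_irrefl 0)
end
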